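/- arXiv:1204.2236 — 6 statements merged into one kernel-verified Lean document; each statement's English description precedes it below -/
import Mathlib

section
/- Let {B_i}_{i∈ℕ} be a sequence of balls in ℝ^n with M_n(B_i) → 0 as i → ∞, and let {U_i}_{i∈ℕ} be a sequence of Lebesgue measurable sets with U_i ⊆ B_i for all i ∈ ℕ. If there is a constant c > 0 such that M_n(U_i) ≥ c·M_n(B_i) for all i ∈ ℕ, then M_n(limsup_{i→∞} B_i) = M_n(limsup_{i→∞} U_i). -/
open MeasureTheory
open scoped ENNReal
open Metric Filter Set

theorem limsup_balls_same_measure (n : ℕ)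
    (c : ℕ → EuclideanSpace ℝ (Fin n)) (r : ℕ → ℝ)
    (B : ℕ → Set (EuclideanSpace ℝ (Fin n))) (hB : ∀ i, B i = Metric.ball (c i) (r i))
    (hB0 : Filter.Tendsto (fun i => volume (B i)) Filter.atTop (nhds 0))
    (U : ℕ → Set (EuclideanSpace ℝ (Fin n)))
    (hUmeas : ∀ i, MeasurableSet (U i)) (hUB : ∀ i, U i ⊆ B i)
    (cst : ℝ) (hcst : 0 < cst)
    (hlow : ∀ i, ENNReal.ofReal cst * volume (B i) ≤ volume (U i)) :
    volume (⋂ N : ℕ, ⋃ i : ℕ, ⋃ (_ : N ≤ i), B i) =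
      volume (⋂ N : ℕ, ⋃ i : ℕ, ⋃ (_ : N ≤ i), U i) := by
  classical
  -- replace cst by min cst 1
  set κ : ℝ := min cst 1 with hκdef
  have hκ0 : 0 < κ := lt_min hcst one_pos
  have hκ1 : κ ≤ 1 := min_le_right _ _
  have hlow' : ∀ i, ENNReal.ofReal κ * volume (B i) ≤ volume (U i) := fun i =>
    le_trans (mul_le_mul_left (ENNReal.ofReal_le_ofReal (min_le_left _ _)) _) (hlow i)
  clear hlow hcst hκdef
  set LB := ⋂ N : ℕ, ⋃ i : ℕ, ⋃ (_ : N ≤ i), B i with hLBdef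
  set LU := ⋂ N : ℕ, ⋃ i : ℕ, ⋃ (_ : N ≤ i), U i with hLUdef
  have hsub : LU ⊆ LB :=
    Set.iInter_mono fun N => Set.iUnion_mono fun i => Set.iUnion_mono fun _ => hUB i
  have hLBmeas : MeasurableSet LB := by
    refine MeasurableSet.iInter fun N => MeasurableSet.iUnion fun i => MeasurableSet.iUnion
      fun _ => ?_
    rw [hB i]; exact measurableSet_ball
  refine le_antisymm ?_ (measure_mono hsub)
  -- key: volume (LB \ (⋃ i ≥ N, U i)) = 0 for each N
  have key : ∀ N : ℕ, volume (LB \ ⋃ i : ℕ, ⋃ (_ : N ≤ i), U i) = 0 := by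
    intro N
    set Z := ⋃ i : ℕ, ⋃ (_ : N ≤ i), U i with hZdef
    set W := LB \ Z with hWdef
    have hWmeas : MeasurableSet W :=
      hLBmeas.diff (MeasurableSet.iUnion fun i => MeasurableSet.iUnion fun _ => hUmeas i)
    by_contra hW
    -- density point
    obtain ⟨d, hdW, hd⟩ := Measure.exists_mem_of_measure_ne_zero_of_ae hW
      (ae_restrict_of_ae (Besicovitch.ae_tendsto_measure_inter_div_of_measurableSet volume hWmeas))
    rw [Set.indicator_of_mem hdW] at hd
    have hd1 : Tendsto (fun ρ => volume (W ∩ closedBall d ρ) / volume (closedBall d ρ))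
        (nhdsWithin 0 (Set.Ioi 0)) (nhds 1) := hd
    have hdLB : d ∈ LB := hdW.1
    set u := volume (ball (0 : EuclideanSpace ℝ (Fin n)) 1) with hudef
    have hu0 : u ≠ 0 := (measure_ball_pos volume _ one_pos).ne'
    have hut : u ≠ ⊤ := measure_ball_lt_top.ne
    set a : ℝ≥0∞ := 1 - ENNReal.ofReal (κ / 2 ^ n) with hadef
    have hκ2 : (0:ℝ) < κ / 2 ^ n := div_pos hκ0 (by positivity)
    have ha1 : a < 1 := ENNReal.sub_lt_self ENNReal.one_ne_top one_ne_zero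
      (by simpa using (ENNReal.ofReal_pos.2 hκ2).ne')
    -- for each k there is a good radius
    have main : ∀ k : ℕ, ∃ ρ : ℝ, 0 < ρ ∧ ρ ≤ 2 / (k + 1) ∧
        volume (W ∩ closedBall d ρ) / volume (closedBall d ρ) ≤ a := by
      intro k
      have hρ₀ : (0:ℝ) < 1 / (k + 1) := by positivity
      set ε := volume (ball d (1 / ((k:ℝ) + 1))) with hεdef
      have hε0 : 0 < ε := measure_ball_pos volume d hρ₀
      obtain ⟨M, hM⟩ := (eventually_atTop).1 (hB0.eventually_lt_const hε0)
      have : d ∈ ⋃ i : ℕ, ⋃ (_ : max N M ≤ i), B i := by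
        rw [hLBdef] at hdLB
        exact Set.mem_iInter.1 hdLB (max N M)
      obtain ⟨i, hi, hdB⟩ := Set.mem_iUnion₂.1 this
      have hiN : N ≤ i := le_trans (le_max_left _ _) hi
      have hiM : M ≤ i := le_trans (le_max_right _ _) hi
      have hdball : dist d (c i) < r i := by rw [hB i] at hdB; exact mem_ball.1 hdB
      have hri : 0 < r i := lt_of_le_of_lt dist_nonneg hdball
      have hvolB : volume (B i) = ENNReal.ofReal (r i ^ n) * u := by
        rw [hB i, Measure.addHaar_ball_of_pos volume _ hri, finrank_euclideanSpace_fin]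
      have hvolε : ε = ENNReal.ofReal ((1 / ((k:ℝ) + 1)) ^ n) * u := by
        rw [hεdef, Measure.addHaar_ball_of_pos volume _ hρ₀, finrank_euclideanSpace_fin]
      have hBε : volume (B i) < ε := hM i hiM
      rw [hvolB, hvolε] at hBε
      have h1 : ENNReal.ofReal (r i ^ n) < ENNReal.ofReal ((1 / ((k:ℝ) + 1)) ^ n) :=
        (ENNReal.mul_lt_mul_iff_left hu0 hut).1 hBε
      have h2 : r i ^ n < (1 / ((k:ℝ) + 1)) ^ n :=
        lt_of_lt_of_le ((ENNReal.ofReal_lt_ofReal_iff (by positivity)).1 h1) le_rfl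
      have hrlt : r i < 1 / ((k:ℝ) + 1) := by
        by_contra h
        push_neg at h
        exact absurd h2 (not_lt.2 (pow_le_pow_left₀ hρ₀.le h n))
      refine ⟨2 * r i, by positivity, ?_, ?_⟩
      · rw [div_eq_mul_inv, ← one_div]
        linarith
      -- ratio bound
      set ρ := 2 * r i with hρdef
      have hρpos : 0 < ρ := by positivity
      have hBsub : B i ⊆ closedBall d ρ := by
        rw [hB i]
        intro x hx
        have h := mem_ball.1 hx
        have : dist x d ≤ dist x (c i) + dist (c i) d := dist_triangle _ _ _
        rw [mem_closedBall]
        have := dist_comm d (c i) ▸ hdball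
        nlinarith [mem_ball.1 hx, dist_comm (c i) d ▸ hdball]
      set v := volume (closedBall d ρ) with hvdef
      have hv : v = ENNReal.ofReal (2 ^ n) * volume (B i) := by
        rw [hvdef, Measure.addHaar_closedBall volume _ hρpos.le, finrank_euclideanSpace_fin,
          hvolB, hρdef, mul_pow, ← mul_assoc, ENNReal.ofReal_mul (by positivity)]
      have hvt : v ≠ ⊤ := measure_closedBall_lt_top.ne
      have hv0 : v ≠ 0 := (measure_closedBall_pos volume d hρpos).ne'
      have hUsub : U i ⊆ closedBall d ρ := (hUB i).trans hBsub
      have hUfin : volume (U i) ≠ ⊤ := (lt_of_le_of_lt (measure_mono hUsub)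
        (lt_top_iff_ne_top.2 hvt)).ne
      have hWdisj : W ∩ U i = ∅ := by
        apply Set.eq_empty_of_forall_notMem
        rintro x ⟨hxW, hxU⟩
        exact hxW.2 (Set.mem_iUnion₂.2 ⟨i, hiN, hxU⟩)
      have hsub2 : W ∩ closedBall d ρ ⊆ closedBall d ρ \ U i := by
        rintro x ⟨hxW, hxB⟩
        refine ⟨hxB, fun hxU => ?_⟩
        have hx : x ∈ W ∩ U i := ⟨hxW, hxU⟩
        rw [hWdisj] at hx
        exact hx
      have hstep : volume (W ∩ closedBall d ρ) ≤ v - volume (U i) := by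
        refine le_trans (measure_mono hsub2) ?_
        rw [measure_diff hUsub (hUmeas i).nullMeasurableSet hUfin]
      have hκv : ENNReal.ofReal (κ / 2 ^ n) * v ≤ volume (U i) := by
        rw [hv, ← mul_assoc, ← ENNReal.ofReal_mul hκ2.le, div_mul_cancel₀ _ (by positivity : (2:ℝ)^n ≠ 0)]
        exact hlow' i
      have hav : v - volume (U i) ≤ a * v := by
        rw [hadef, ENNReal.sub_mul (fun _ _ => hvt), one_mul]
        exact tsub_le_tsub_left hκv v
      rw [ENNReal.div_le_iff_le_mul (Or.inl hv0) (Or.inl hvt)]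
      calc volume (W ∩ closedBall d ρ) ≤ v - volume (U i) := hstep
        _ ≤ a * v := hav
    choose ρ hρpos hρle hρbound using main
    have hρ0 : Tendsto ρ atTop (nhds 0) := by
      refine squeeze_zero (fun k => (hρpos k).le) hρle ?_
      have := tendsto_const_div_atTop_nhds_zero_nat (2:ℝ)
      refine (this.comp (tendsto_add_atTop_nat 1)).congr fun k => ?_
      simp only [Function.comp_apply]
      push_cast
      ring
    have hρ0' : Tendsto ρ atTop (nhdsWithin 0 (Set.Ioi 0)) :=
      tendsto_nhdsWithin_of_tendsto_nhds_of_eventually_within _ hρ0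
        (Eventually.of_forall fun k => hρpos k)
    have hlim : Tendsto (fun k => volume (W ∩ closedBall d (ρ k)) / volume (closedBall d (ρ k)))
        atTop (nhds 1) := hd1.comp hρ0'
    have : (1:ℝ≥0∞) ≤ a := le_of_tendsto hlim (Eventually.of_forall hρbound)
    exact absurd this (not_le.2 ha1)
  -- conclude
  have hdiff : volume (LB \ LU) = 0 := by
    have : LB \ LU ⊆ ⋃ N : ℕ, (LB \ ⋃ i : ℕ, ⋃ (_ : N ≤ i), U i) := by
      rintro x ⟨hxB, hxU⟩
      rw [hLUdef, Set.mem_iInter] at hxU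
      push_neg at hxU
      obtain ⟨N, hN⟩ := hxU
      exact Set.mem_iUnion.2 ⟨N, hxB, hN⟩
    exact measure_mono_null this (measure_iUnion_null key)
  calc volume LB ≤ volume (LU ∪ (LB \ LU)) :=
        measure_mono (fun x hx => by
          by_cases h : x ∈ LU
          · exact Or.inl h
          · exact Or.inr ⟨hx, h⟩)
    _ ≤ volume LU + volume (LB \ LU) := measure_union_le _ _
    _ = volume LU := by rw [hdiff, add_zero]
end

section
/- Let n ≥ 1, let s ≥ 2 be an integer, and let e ∈ ℤ^n. Consider the transformation T of 𝕀^n into itself given by T(X) = sX + e/s (mod 1), taken coordinatewise. If A ⊆ 𝕀^n is a Lebesgue measurable set with T(A) ⊆ A, then M_n(A) = 0 or M_n(A) = 1. -/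
open MeasureTheory Set MeasurableSpace
open scoped ENNReal


lemma rot_meas (c : ℝ) (S : Set ℝ) (hS : MeasurableSet S) (hS1 : S ⊆ Ico (0:ℝ) 1) :
    volume ((fun x => Int.fract (x + c)) ⁻¹' S ∩ Ico (0:ℝ) 1) = volume S := by
  set c' : ℝ := Int.fract c with hc'def
  have hc0 : 0 ≤ c' := Int.fract_nonneg c
  have hc1 : c' < 1 := Int.fract_lt_one c
  have key : ∀ x : ℝ, Int.fract (x + c) = Int.fract (x + c') := by
    intro x
    have : x + c = x + c' + (⌊c⌋ : ℝ) := by rw [hc'def, Int.fract]; ring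
    rw [this, Int.fract_add_intCast]
  have hset : (fun x => Int.fract (x + c)) ⁻¹' S ∩ Ico (0:ℝ) 1 =
      ((· + c') ⁻¹' (S ∩ Ico c' 1)) ∪ ((· + (c' - 1)) ⁻¹' (S ∩ Ico 0 c')) := by
    ext x
    simp only [mem_inter_iff, mem_preimage, mem_Ico, mem_union, key]
    constructor
    · rintro ⟨hfS, hx0, hx1⟩
      rcases lt_or_ge (x + c') 1 with h | h
      · left
        have hfr : Int.fract (x + c') = x + c' := Int.fract_eq_self.2 ⟨by linarith, h⟩
        exact ⟨hfr ▸ hfS, by linarith, h⟩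
      · right
        have hfr : Int.fract (x + c') = x + (c' - 1) := by
          have : x + c' = (x + (c' - 1)) + (1 : ℤ) := by push_cast; ring
          rw [this, Int.fract_add_intCast, Int.fract_eq_self.2 ⟨by linarith, by linarith⟩]
        exact ⟨hfr ▸ hfS, by linarith, by linarith⟩
    · rintro (⟨hmem, h0, h1⟩ | ⟨hmem, h0, h1⟩)
      · have hfr : Int.fract (x + c') = x + c' := Int.fract_eq_self.2 ⟨by linarith, h1⟩
        exact ⟨by rw [hfr]; exact hmem, by linarith, by linarith⟩
      · have hfr : Int.fract (x + c') = x + (c' - 1) := by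
          have : x + c' = (x + (c' - 1)) + (1 : ℤ) := by push_cast; ring
          rw [this, Int.fract_add_intCast, Int.fract_eq_self.2 ⟨h0, by linarith⟩]
        exact ⟨by rw [hfr]; exact hmem, by linarith, by linarith⟩
  have hdisj : Disjoint ((· + c') ⁻¹' (S ∩ Ico c' 1)) ((· + (c' - 1)) ⁻¹' (S ∩ Ico 0 c')) := by
    refine Set.disjoint_left.2 fun x hx1 hx2 => ?_
    have h1 : x + c' < 1 := (hx1.2).2
    have h2 : 0 ≤ x + (c' - 1) := (hx2.2).1
    linarith
  rw [hset, measure_union hdisj ((measurable_add_const (c' - 1)) (hS.inter measurableSet_Ico))]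
  rw [measure_preimage_add_right, measure_preimage_add_right]
  rw [add_comm, ← measure_union ?_ (hS.inter measurableSet_Ico)]
  · congr 1
    ext x
    simp only [mem_union, mem_inter_iff, mem_Ico]
    constructor
    · rintro (⟨h, _⟩ | ⟨h, _⟩) <;> exact h
    · intro hx
      rcases le_or_gt c' x with h | h
      · exact Or.inr ⟨hx, h, (hS1 hx).2⟩
      · exact Or.inl ⟨hx, (hS1 hx).1, h⟩
  · refine Set.disjoint_left.2 fun x hx1 hx2 => ?_
    exact absurd hx1.2.2 (not_lt.2 hx2.2.1)

lemma unit_meas (m : ℕ) (hm : 0 < m) (c : ℝ) (a : ℤ) (S : Set ℝ) (hS : MeasurableSet S)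
    (hS1 : S ⊆ Ico (0:ℝ) 1) :
    volume ((fun x => Int.fract ((m : ℝ) * x + c)) ⁻¹' S ∩ Ico ((a : ℝ) / m) (((a : ℝ) + 1) / m))
      = (m : ℝ≥0∞)⁻¹ * volume S := by
  have hm0 : (0 : ℝ) < m := by exact_mod_cast hm
  have hset : (fun x => Int.fract ((m : ℝ) * x + c)) ⁻¹' S ∩ Ico ((a : ℝ) / m) (((a : ℝ) + 1) / m)
      = (fun x : ℝ => (m : ℝ) * x) ⁻¹' ((fun y : ℝ => y + (-(a:ℝ))) ⁻¹'
          ((fun y => Int.fract (y + c)) ⁻¹' S ∩ Ico (0:ℝ) 1)) := by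
    ext x
    simp only [mem_inter_iff, mem_preimage, mem_Ico]
    have hfr : Int.fract ((m : ℝ) * x + -(a:ℝ) + c) = Int.fract ((m : ℝ) * x + c) := by
      have : (m : ℝ) * x + -(a:ℝ) + c = ((m : ℝ) * x + c) + (-a : ℤ) := by push_cast; ring
      rw [this, Int.fract_add_intCast]
    rw [hfr]
    constructor
    · rintro ⟨h1, h2, h3⟩
      rw [div_le_iff₀ hm0] at h2
      rw [lt_div_iff₀ hm0] at h3
      exact ⟨h1, by linarith, by linarith⟩
    · rintro ⟨h1, h2, h3⟩
      refine ⟨h1, ?_, ?_⟩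
      · rw [div_le_iff₀ hm0]; linarith
      · rw [lt_div_iff₀ hm0]; linarith
  rw [hset, Real.volume_preimage_mul_left (by positivity : (m:ℝ) ≠ 0),
    measure_preimage_add_right, rot_meas c S hS hS1]
  congr 1
  rw [abs_of_pos (by positivity : (0:ℝ) < (m:ℝ)⁻¹), ENNReal.ofReal_inv_of_pos hm0,
    ENNReal.ofReal_natCast]

lemma range_meas (m : ℕ) (hm : 0 < m) (c : ℝ) (S : Set ℝ) (hS : MeasurableSet S)
    (hS1 : S ⊆ Ico (0:ℝ) 1) (t : ℕ) : ∀ u : ℤ,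
    volume ((fun x => Int.fract ((m : ℝ) * x + c)) ⁻¹' S ∩ Ico ((u : ℝ) / m) (((u + t : ℤ) : ℝ) / m))
      = (t : ℝ≥0∞) * (m : ℝ≥0∞)⁻¹ * volume S := by
  induction t with
  | zero => intro u; simp
  | succ t ih =>
    intro u
    have hm0 : (0 : ℝ) < m := by exact_mod_cast hm
    have hsplit : Ico ((u : ℝ) / m) (((u + ((t+1:ℕ):ℤ) : ℤ) : ℝ) / m) =
        Ico ((u : ℝ) / m) (((u + t : ℤ) : ℝ) / m) ∪
        Ico (((u + t : ℤ) : ℝ) / m) ((((u + t : ℤ) : ℝ) + 1) / m) := by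
      rw [Ico_union_Ico_eq_Ico]
      · congr 1; push_cast; ring
      · gcongr
        push_cast; linarith
      · gcongr
        push_cast; linarith
    have hmeas : Measurable (fun x : ℝ => Int.fract ((m : ℝ) * x + c)) :=
      ((measurable_id.const_mul _).add_const c).fract
    rw [hsplit, Set.inter_union_distrib_left,
      measure_union (Set.Ico_disjoint_Ico_same.mono inter_subset_right
        inter_subset_right) ((hmeas hS).inter measurableSet_Ico),
      ih u, unit_meas m hm c (u + t) S hS hS1]
    push_cast
    ring

lemma adic_meas (s : ℕ) (hs : 2 ≤ s) (k j : ℕ) (hj : j ≤ k) (c : ℝ) (a : ℤ)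
    (t : Set ℝ) (ht : MeasurableSet t) :
    volume ((fun x => Int.fract (((s^k : ℕ) : ℝ) * x + c)) ⁻¹' t
        ∩ Ico ((a : ℝ) / s^j) (((a : ℝ) + 1) / s^j))
      = ((s : ℝ≥0∞)^j)⁻¹ * volume (t ∩ Ico (0:ℝ) 1) := by
  have hs0 : 0 < s := by omega
  have hsR : (0:ℝ) < s := by exact_mod_cast hs0
  set S : Set ℝ := t ∩ Ico (0:ℝ) 1 with hSdef
  have hSm : MeasurableSet S := ht.inter measurableSet_Ico
  have hS1 : S ⊆ Ico (0:ℝ) 1 := inter_subset_right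
  have hpre : (fun x => Int.fract (((s^k : ℕ) : ℝ) * x + c)) ⁻¹' t =
      (fun x => Int.fract (((s^k : ℕ) : ℝ) * x + c)) ⁻¹' S := by
    ext x
    simp only [mem_preimage, hSdef, mem_inter_iff, mem_Ico]
    exact ⟨fun h => ⟨h, Int.fract_nonneg _, Int.fract_lt_one _⟩, fun h => h.1⟩
  have hep1 : (a : ℝ) / s^j = (((a * s^(k-j) : ℤ)) : ℝ) / ((s^k : ℕ) : ℝ) := by
    have : (s:ℝ)^k = (s:ℝ)^j * (s:ℝ)^(k-j) := by
      rw [← pow_add]; congr 1; omega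
    push_cast
    rw [this]
    field_simp
  have hep2 : ((a : ℝ) + 1) / s^j =
      (((a * s^(k-j) + s^(k-j) : ℤ)) : ℝ) / ((s^k : ℕ) : ℝ) := by
    have : (s:ℝ)^k = (s:ℝ)^j * (s:ℝ)^(k-j) := by
      rw [← pow_add]; congr 1; omega
    push_cast
    rw [this]
    field_simp
  have hrm := range_meas (s^k) (by positivity) c S hSm hS1 (s^(k-j)) (a * s^(k-j))
  rw [hpre, hep1, hep2]
  have harg : ((a * s^(k-j) : ℤ) : ℝ) + 1 = (((a * s^(k-j) + (((s^(k-j) : ℕ)) : ℤ)) : ℤ) : ℝ)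
      - ((s^(k-j) : ℕ) : ℝ) + 1 := by push_cast; ring
  have hico : Ico (((a * s^(k-j) : ℤ)) : ℝ) (((a * s^(k-j) + s^(k-j) : ℤ)) : ℝ) = Ico _ _ := rfl
  -- rewrite target interval to match range_meas
  have : (((a * s^(k-j) + s^(k-j) : ℤ)) : ℝ) =
      (((a * s^(k-j) + ((s^(k-j) : ℕ) : ℤ) : ℤ)) : ℝ) := by push_cast; ring
  rw [this, hrm]
  -- now arithmetic in ℝ≥0∞
  have h1 : ((s^(k-j) : ℕ) : ℝ≥0∞) = (s : ℝ≥0∞)^(k-j) := by push_cast; rfl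
  have h2 : ((s^k : ℕ) : ℝ≥0∞) = (s : ℝ≥0∞)^j * (s : ℝ≥0∞)^(k-j) := by
    push_cast
    rw [← pow_add]
    congr 1
    omega
  rw [h1, h2, ENNReal.mul_inv (Or.inl (by positivity)) (Or.inl (by simp))]
  congr 1
  rw [mul_comm ((s:ℝ≥0∞)^(k-j)) _, mul_assoc,
    ENNReal.inv_mul_cancel (by positivity) (by simp), mul_one]

lemma piBox (n : ℕ) (g : Fin n → ℝ → ℝ) (hg : ∀ i, Measurable (g i))
    (J : Fin n → Set ℝ) (hJ : ∀ i, MeasurableSet (J i))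
    (c : Fin n → ℝ≥0∞) (hc : ∀ i, c i ≠ ∞)
    (h1 : ∀ i (t : Set ℝ), MeasurableSet t →
      volume ((g i) ⁻¹' t ∩ J i) = c i * volume (t ∩ Ico (0:ℝ) 1))
    (S : Set (Fin n → ℝ)) (hS : MeasurableSet S) :
    volume ((fun x i => g i (x i)) ⁻¹' S ∩ Set.univ.pi J)
      = (∏ i, c i) * volume (S ∩ Set.univ.pi fun _ => Ico (0:ℝ) 1) := by
  set ν : Fin n → Measure ℝ := fun i => c i • volume.restrict (Ico (0:ℝ) 1) with hν
  have hνap : ∀ i (t : Set ℝ), MeasurableSet t → ν i t = c i * volume (t ∩ Ico (0:ℝ) 1) := by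
    intro i t ht
    rw [hν]
    simp [Measure.restrict_apply ht]
  haveI : ∀ i, IsFiniteMeasure (ν i) := by
    intro i
    refine ⟨?_⟩
    rw [hνap i univ MeasurableSet.univ]
    simp only [univ_inter, Real.volume_Ico]
    exact ENNReal.mul_lt_top (hc i).lt_top (by norm_num)
  have hG : Measurable (fun x : Fin n → ℝ => fun i => g i (x i)) :=
    measurable_pi_lambda _ fun i => (hg i).comp (measurable_pi_apply i)
  have hpreG : ∀ t : Fin n → Set ℝ,
      (fun x : Fin n → ℝ => fun i => g i (x i)) ⁻¹' Set.univ.pi t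
        = Set.univ.pi fun i => g i ⁻¹' t i := by
    intro t; ext x; simp [Set.mem_pi]
  have hmap : Measure.pi ν =
      Measure.map (fun x : Fin n → ℝ => fun i => g i (x i))
        (volume.restrict (Set.univ.pi J)) := by
    refine Measure.pi_eq fun t ht => ?_
    rw [Measure.map_apply hG (MeasurableSet.univ_pi ht),
      Measure.restrict_apply (hG (MeasurableSet.univ_pi ht)), hpreG,
      ← Set.pi_inter_distrib, volume_pi, Measure.pi_pi]
    exact Finset.prod_congr rfl fun i _ => by
      rw [h1 i (t i) (ht i), ← hνap i (t i) (ht i)]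
  have hpi2 : Measure.pi ν =
      (∏ i, c i) • volume.restrict (Set.univ.pi fun _ : Fin n => Ico (0:ℝ) 1) := by
    refine Measure.pi_eq fun t ht => ?_
    rw [Measure.smul_apply, smul_eq_mul,
      Measure.restrict_apply (MeasurableSet.univ_pi ht), ← Set.pi_inter_distrib,
      volume_pi, Measure.pi_pi, ← Finset.prod_mul_distrib]
    exact Finset.prod_congr rfl fun i _ => (hνap i (t i) (ht i)).symm
  have : volume ((fun x : Fin n → ℝ => fun i => g i (x i)) ⁻¹' S ∩ Set.univ.pi J)
      = Measure.map (fun x : Fin n → ℝ => fun i => g i (x i))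
        (volume.restrict (Set.univ.pi J)) S := by
    rw [Measure.map_apply hG hS, Measure.restrict_apply (hG hS)]
  rw [this, ← hmap, hpi2, Measure.smul_apply, smul_eq_mul,
    Measure.restrict_apply hS]

-- the family of s-adic intervals
def adicC (s : ℕ) : Set (Set ℝ) :=
  {J | ∃ (k : ℕ) (a : ℤ), J = Ico ((a : ℝ) / s^k) (((a : ℝ) + 1) / s^k)}

lemma adic_subset (s : ℕ) (hs : 2 ≤ s) {j k : ℕ} (hjk : j ≤ k) (a b : ℤ)
    (hne : (Ico ((a : ℝ) / s^j) (((a : ℝ) + 1) / s^j) ∩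
      Ico ((b : ℝ) / s^k) (((b : ℝ) + 1) / s^k)).Nonempty) :
    Ico ((b : ℝ) / s^k) (((b : ℝ) + 1) / s^k) ⊆ Ico ((a : ℝ) / s^j) (((a : ℝ) + 1) / s^j) := by
  have hsR : (0:ℝ) < s := by positivity
  have hpj : (0:ℝ) < (s:ℝ)^j := by positivity
  have hpk : (0:ℝ) < (s:ℝ)^k := by positivity
  obtain ⟨x, ⟨hx1, hx2⟩, ⟨hx3, hx4⟩⟩ := hne
  set d : ℕ := s^(k-j) with hd
  have hsk : (s:ℝ)^k = (s:ℝ)^j * d := by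
    rw [hd]; push_cast; rw [← pow_add]; congr 1; omega
  -- integer inequalities
  have h1R : (a:ℝ) * d ≤ (x * s^k) := by
    rw [hsk]; rw [div_le_iff₀ hpj] at hx1; nlinarith
  have h2R : x * s^k < ((a:ℝ) + 1) * d := by
    rw [hsk]; rw [lt_div_iff₀ hpj] at hx2
    have hdpos : (0:ℝ) < (d:ℝ) := by rw [hd]; positivity
    nlinarith
  have h3R : (b:ℝ) ≤ x * s^k := by rw [div_le_iff₀ hpk] at hx3; linarith
  have h4R : x * s^k < (b:ℝ) + 1 := by rw [lt_div_iff₀ hpk] at hx4; linarith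
  have hab1 : (a:ℝ) * d < (b:ℝ) + 1 := lt_of_le_of_lt h1R h4R
  have hab2 : (b:ℝ) < ((a:ℝ) + 1) * d := lt_of_le_of_lt h3R h2R
  have hZ1 : a * (d:ℤ) ≤ b := by
    have : (a * (d:ℤ) : ℝ) < (b:ℝ) + 1 := by push_cast; push_cast at hab1; linarith
    have := (Int.lt_iff_add_one_le).1 (by exact_mod_cast this : a * (d:ℤ) < b + 1)
    omega
  have hZ2 : b + 1 ≤ (a + 1) * (d:ℤ) := by
    have : (b:ℝ) < ((a + 1) * (d:ℤ) : ℝ) := by push_cast; push_cast at hab2; linarith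
    exact (Int.lt_iff_add_one_le).1 (by exact_mod_cast this)
  intro y ⟨hy1, hy2⟩
  constructor
  · calc (a:ℝ) / s^j = ((a:ℝ) * d) / s^k := by rw [hsk, mul_div_mul_right _ _ (by rw [hd]; positivity : ((d:ℕ):ℝ) ≠ 0)]
    _ ≤ (b:ℝ) / s^k := by
        gcongr
        exact_mod_cast hZ1
    _ ≤ y := hy1
  · calc y < ((b:ℝ) + 1) / s^k := hy2
    _ ≤ (((a:ℝ) + 1) * d) / s^k := by
        gcongr
        exact_mod_cast hZ2
    _ = ((a:ℝ) + 1) / s^j := by rw [hsk, mul_div_mul_right _ _ (by rw [hd]; positivity : ((d:ℕ):ℝ) ≠ 0)]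

lemma adicC_pi (s : ℕ) (hs : 2 ≤ s) : IsPiSystem (adicC s) := by
  rintro J1 ⟨j, a, rfl⟩ J2 ⟨k, b, rfl⟩ hne
  rcases le_total j k with h | h
  · have := adic_subset s hs h a b hne
    rw [inter_eq_self_of_subset_right this]
    exact ⟨k, b, rfl⟩
  · have := adic_subset s hs h b a (by rwa [inter_comm] at hne)
    rw [inter_eq_self_of_subset_left this]
    exact ⟨j, a, rfl⟩

lemma adicC_spanning (s : ℕ) (hs : 2 ≤ s) : IsCountablySpanning (adicC s) := by
  refine ⟨fun m => Ico (((Denumerable.ofNat ℤ m : ℤ) : ℝ) / s^0)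
    ((((Denumerable.ofNat ℤ m : ℤ) : ℝ) + 1) / s^0), fun m => ⟨0, _, rfl⟩, ?_⟩
  ext x
  simp only [mem_iUnion, mem_univ, iff_true, pow_zero, div_one, mem_Ico]
  refine ⟨Encodable.encode (⌊x⌋ : ℤ), ?_⟩
  rw [Denumerable.ofNat_encode]
  exact ⟨Int.floor_le x, by push_cast; linarith [Int.lt_floor_add_one x]⟩

-- s-adic rationals are dense
lemma adic_dense (s : ℕ) (hs : 2 ≤ s) :
    Dense {x : ℝ | ∃ (k : ℕ) (a : ℤ), x = (a : ℝ) / s^k} := by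
  rw [dense_iff_exists_between]
  intro p q hpq
  have hs1 : (1:ℝ) < s := by exact_mod_cast hs.trans_lt' one_lt_two
  obtain ⟨k, hk⟩ := pow_unbounded_of_one_lt ((q - p)⁻¹) hs1
  have hpk : (0:ℝ) < (s:ℝ)^k := by positivity
  have hqp : (0:ℝ) < q - p := by linarith
  have h1 : 1 < (q - p) * s^k := by
    have h2 := mul_lt_mul_of_pos_left hk hqp
    rwa [mul_inv_cancel₀ (ne_of_gt hqp)] at h2
  refine ⟨((⌊p * s^k⌋ + 1 : ℤ) : ℝ) / s^k, ⟨k, _, rfl⟩, ?_, ?_⟩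
  · rw [lt_div_iff₀ hpk]
    push_cast
    linarith [Int.lt_floor_add_one (p * s^k)]
  · rw [div_lt_iff₀ hpk]
    push_cast
    linarith [Int.floor_le (p * s^k)]

lemma adic_Ico_meas (s : ℕ) (hs : 2 ≤ s) (m : ℕ) : ∀ (t : ℕ) (p : ℤ),
    MeasurableSet[generateFrom (adicC s)] (Ico ((p:ℝ)/s^m) (((p + t : ℤ):ℝ)/s^m)) := by
  have hsR : (0:ℝ) < s := by positivity
  have hpm : (0:ℝ) < (s:ℝ)^m := by positivity
  intro t
  induction t with
  | zero => intro p; simp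
  | succ t ih =>
    intro p
    have hsplit : Ico ((p : ℝ) / s^m) (((p + ((t+1:ℕ):ℤ) : ℤ) : ℝ) / s^m) =
        Ico ((p : ℝ) / s^m) (((p + t : ℤ) : ℝ) / s^m) ∪
        Ico (((p + t : ℤ) : ℝ) / s^m) ((((p + t : ℤ) : ℝ) + 1) / s^m) := by
      rw [Ico_union_Ico_eq_Ico]
      · congr 1; push_cast; ring
      · gcongr; push_cast; linarith
      · gcongr; push_cast; linarith
    rw [hsplit]
    exact (ih p).union (measurableSet_generateFrom ⟨m, p + t, rfl⟩)

lemma adic_gen (s : ℕ) (hs : 2 ≤ s) :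
    (inferInstance : MeasurableSpace ℝ) = generateFrom (adicC s) := by
  have hsR : (0:ℝ) < s := by positivity
  refine le_antisymm ?_ (generateFrom_le fun J hJ => ?_)
  · rw [(inferInstance : BorelSpace ℝ).measurable_eq,
      (adic_dense s hs).borel_eq_generateFrom_Ico_mem]
    refine generateFrom_le ?_
    rintro _ ⟨l, ⟨j, a, rfl⟩, u, ⟨k, b, rfl⟩, hlt, rfl⟩
    set m : ℕ := max j k with hm
    have hpm : (0:ℝ) < (s:ℝ)^m := by positivity
    have hde1 : (a:ℝ)/s^j = (((a * s^(m-j) : ℤ)):ℝ)/s^m := by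
      have : (s:ℝ)^m = (s:ℝ)^j * (s:ℝ)^(m-j) := by
        rw [← pow_add]; congr 1; omega
      push_cast; rw [this]; field_simp
    have hde2 : (b:ℝ)/s^k = (((b * s^(m-k) : ℤ)):ℝ)/s^m := by
      have : (s:ℝ)^m = (s:ℝ)^k * (s:ℝ)^(m-k) := by
        rw [← pow_add]; congr 1; omega
      push_cast; rw [this]; field_simp
    set p : ℤ := a * s^(m-j) with hp
    set q : ℤ := b * s^(m-k) with hq
    have hpq : p ≤ q := by
      rw [hde1, hde2, div_lt_div_iff_of_pos_right hpm] at hlt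
      exact_mod_cast hlt.le
    have : Ico ((a:ℝ)/s^j) ((b:ℝ)/s^k) =
        Ico ((p:ℝ)/s^m) (((p + ((q - p).toNat : ℕ) : ℤ):ℝ)/s^m) := by
      rw [hde1, hde2]
      congr 2
      push_cast [Int.toNat_of_nonneg (by omega : (0:ℤ) ≤ q - p)]
      ring
    rw [this]
    exact adic_Ico_meas s hs m (q - p).toNat p
  · obtain ⟨k, a, rfl⟩ := hJ
    exact measurableSet_Ico

lemma box_gen (n s : ℕ) (hs : 2 ≤ s) :
    (inferInstance : MeasurableSpace (Fin n → ℝ)) =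
      generateFrom (Set.pi univ '' Set.pi univ (fun _ : Fin n => adicC s)) :=
  (generateFrom_eq_pi (fun _ => (adic_gen s hs).symm) (fun _ => adicC_spanning s hs)).symm

lemma box_pi (n s : ℕ) (hs : 2 ≤ s) :
    IsPiSystem (Set.pi univ '' Set.pi univ (fun _ : Fin n => adicC s)) :=
  IsPiSystem.pi (fun _ => adicC_pi s hs)

lemma adic_Ico_vol (s : ℕ) (hs : 2 ≤ s) (j : ℕ) (a : ℤ) :
    volume (Ico ((a:ℝ)/s^j) (((a:ℝ)+1)/s^j)) = ((s:ℝ≥0∞)^j)⁻¹ := by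
  have hsR : (0:ℝ) < s := by positivity
  have hpj : (0:ℝ) < (s:ℝ)^j := by positivity
  rw [Real.volume_Ico]
  have : ((a:ℝ)+1)/s^j - (a:ℝ)/s^j = ((s:ℝ)^j)⁻¹ := by field_simp; ring
  rw [this, ENNReal.ofReal_inv_of_pos hpj]
  congr 1
  rw [ENNReal.ofReal_pow hsR.le, ENNReal.ofReal_natCast]

theorem invariant_set_zero_one (n : ℕ) (hn : 1 ≤ n) (s : ℕ) (hs : 2 ≤ s)
    (e : Fin n → ℤ) (A : Set (Fin n → ℝ))
    (hAsub : A ⊆ {X | ∀ i, X i ∈ Set.Icc (0 : ℝ) 1})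
    (hAmeas : MeasurableSet A)
    (hTA : ∀ X ∈ A, (fun i => Int.fract ((s : ℝ) * X i + (e i : ℝ) / (s : ℝ))) ∈ A) :
    volume A = 0 ∨ volume A = 1 := by
  have hsR : (0:ℝ) < s := by positivity
  set I : Set ℝ := Ico (0:ℝ) 1 with hI
  set cube : Set (Fin n → ℝ) := Set.univ.pi (fun _ => I) with hcube
  have hcubeM : MeasurableSet cube := MeasurableSet.univ_pi fun _ => measurableSet_Ico
  have hvolcube : volume cube = 1 := by
    rw [hcube, volume_pi, Measure.pi_pi]
    simp [hI, Real.volume_Ico]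
  set Icube : Set (Fin n → ℝ) := Set.univ.pi (fun _ => Icc (0:ℝ) 1) with hIcube
  have hIcubeM : MeasurableSet Icube := MeasurableSet.univ_pi fun _ => measurableSet_Icc
  have hvolIcube : volume Icube = 1 := by
    rw [hIcube, volume_pi, Measure.pi_pi]
    simp [Real.volume_Icc]
  have hAIc : A ⊆ Icube := by
    intro X hX
    exact Set.mem_univ_pi.2 fun i => hAsub hX i
  set A' : Set (Fin n → ℝ) := A ∩ cube with hA'
  have hA'm : MeasurableSet A' := hAmeas.inter hcubeM
  have hA'sub : A' ⊆ cube := inter_subset_right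
  have hvolA' : volume A' = volume A := by
    have hd : volume (Icube \ cube) = 0 := by
      rw [measure_diff (fun X hX => Set.mem_univ_pi.2 fun i =>
          Icc_subset_Icc_right le_rfl (Ico_subset_Icc_self ((Set.mem_univ_pi.1 hX) i)))
        hcubeM.nullMeasurableSet (by rw [hvolcube]; norm_num), hvolcube, hvolIcube, tsub_self]
    have hsub : A \ A' ⊆ Icube \ cube := fun X hX =>
      ⟨hAIc hX.1, fun hc => hX.2 ⟨hX.1, hc⟩⟩
    refine le_antisymm (measure_mono inter_subset_left) ?_
    calc volume A ≤ volume (A' ∪ (A \ A')) := measure_mono (fun X hX => by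
          by_cases h : X ∈ cube
          · exact Or.inl ⟨hX, h⟩
          · exact Or.inr ⟨hX, fun hc => h hc.2⟩)
    _ ≤ volume A' + volume (A \ A') := measure_union_le _ _
    _ ≤ volume A' + volume (Icube \ cube) := by gcongr
    _ = volume A' := by rw [hd, add_zero]
  have hvolA'le : volume A' ≤ 1 := hvolcube ▸ measure_mono hA'sub
  -- iterates
  have keyid : ∀ (z w : ℝ), Int.fract ((s:ℝ) * Int.fract z + w) = Int.fract ((s:ℝ) * z + w) := by
    intro z w
    have h0 : Int.fract z = z - ⌊z⌋ := rfl
    have : (s:ℝ) * Int.fract z + w = ((s:ℝ) * z + w) + ((-((s:ℤ) * ⌊z⌋) : ℤ) : ℝ) := by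
      rw [h0]; push_cast; ring
    rw [this, Int.fract_add_intCast]
  have hiter : ∀ k : ℕ, ∃ c : Fin n → ℝ,
      ∀ X ∈ A', (fun i => Int.fract (((s^k : ℕ):ℝ) * X i + c i)) ∈ A' := by
    intro k
    induction k with
    | zero =>
      refine ⟨fun _ => 0, fun X hX => ?_⟩
      have : (fun i => Int.fract (((s^0 : ℕ):ℝ) * X i + 0)) = X := by
        funext i
        have hXi : X i ∈ I := (Set.mem_univ_pi.1 hX.2) i
        simp only [pow_zero, Nat.cast_one, one_mul, add_zero]
        exact Int.fract_eq_self.2 ⟨hXi.1, hXi.2⟩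
      rwa [this]
    | succ k ih =>
      obtain ⟨c, hc⟩ := ih
      refine ⟨fun i => (s:ℝ) * c i + (e i : ℝ)/(s:ℝ), fun X hX => ?_⟩
      have hY := hc X hX
      have hTY := hTA _ hY.1
      have heq : (fun i => Int.fract ((s : ℝ) *
            (fun i => Int.fract (((s^k : ℕ):ℝ) * X i + c i)) i + (e i : ℝ) / (s : ℝ)))
          = (fun i => Int.fract (((s^(k+1) : ℕ):ℝ) * X i + ((s:ℝ) * c i + (e i : ℝ)/(s:ℝ)))) := by
        funext i
        simp only []
        rw [keyid (((s^k : ℕ):ℝ) * X i + c i) ((e i : ℝ) / (s : ℝ))]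
        congr 1
        push_cast
        ring
      rw [heq] at hTY
      exact ⟨hTY, Set.mem_univ_pi.2 fun i => ⟨Int.fract_nonneg _, Int.fract_lt_one _⟩⟩
  -- the box measure identity
  have key2 : ∀ (k : ℕ) (κ : Fin n → ℕ), (∀ i, κ i ≤ k) → ∀ (a : Fin n → ℤ),
      (Set.univ.pi (fun i => Ico ((a i : ℝ)/s^(κ i)) (((a i : ℝ)+1)/s^(κ i))) ⊆ cube) →
      volume (A' ∩ Set.univ.pi (fun i => Ico ((a i : ℝ)/s^(κ i)) (((a i : ℝ)+1)/s^(κ i))))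
        = (∏ i, ((s:ℝ≥0∞)^(κ i))⁻¹) * volume A' := by
    intro k κ hκ a hBsub
    obtain ⟨c, hc⟩ := hiter k
    set g : Fin n → ℝ → ℝ := fun i x => Int.fract (((s^k : ℕ):ℝ) * x + c i) with hg
    have hgm : ∀ i, Measurable (g i) := fun i =>
      ((measurable_id.const_mul _).add_const (c i)).fract
    set B : Set (Fin n → ℝ) :=
      Set.univ.pi (fun i => Ico ((a i : ℝ)/s^(κ i)) (((a i : ℝ)+1)/s^(κ i))) with hB
    have hpb := piBox n g hgm _ (fun i => measurableSet_Ico)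
      (fun i => ((s:ℝ≥0∞)^(κ i))⁻¹)
      (fun i => ENNReal.inv_ne_top.2 (by positivity))
      (fun i t ht => adic_meas s hs k (κ i) (hκ i) (c i) (a i) t ht) A' hA'm
    have hpbc := piBox n g hgm (fun _ => Ico ((((0:ℤ)):ℝ)/s^0) (((((0:ℤ)):ℝ)+1)/s^0))
      (fun i => measurableSet_Ico) (fun i => ((s:ℝ≥0∞)^(0:ℕ))⁻¹)
      (fun i => ENNReal.inv_ne_top.2 (by positivity))
      (fun i t ht => adic_meas s hs k 0 (Nat.zero_le k) (c i) 0 t ht) A' hA'm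
    have hcubeq : Set.univ.pi (fun _ : Fin n => Ico ((((0:ℤ)):ℝ)/s^0) (((((0:ℤ)):ℝ)+1)/s^0))
        = cube := by
      rw [hcube]
      congr 1
      funext i
      norm_num [hI]
    have hA'cube : A' ∩ cube = A' := inter_eq_self_of_subset_left hA'sub
    rw [hcubeq, hA'cube] at hpbc
    simp only [pow_zero, inv_one, Finset.prod_const_one, one_mul] at hpbc
    -- hpbc : volume (G⁻¹A' ∩ cube) = volume A'
    set G : (Fin n → ℝ) → (Fin n → ℝ) := fun x i => g i (x i) with hG
    have hGm : Measurable G := measurable_pi_lambda _ fun i => (hgm i).comp (measurable_pi_apply i)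
    have hsubD : A' ⊆ G ⁻¹' A' ∩ cube := by
      intro X hX
      exact ⟨hc X hX, hA'sub hX⟩
    have hDk : volume ((G ⁻¹' A' ∩ cube) \ A') = 0 := by
      rw [measure_diff hsubD hA'm.nullMeasurableSet
        (lt_of_le_of_lt hvolA'le ENNReal.one_lt_top).ne, hpbc, tsub_self]
    have hstep : volume (A' ∩ B) = volume ((G ⁻¹' A' ∩ cube) ∩ B) := by
      refine le_antisymm (measure_mono (inter_subset_inter_left _ hsubD)) ?_
      calc volume ((G ⁻¹' A' ∩ cube) ∩ B)
          ≤ volume ((A' ∩ B) ∪ ((G ⁻¹' A' ∩ cube) \ A')) := measure_mono (fun X hX => by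
            by_cases h : X ∈ A'
            · exact Or.inl ⟨h, hX.2⟩
            · exact Or.inr ⟨hX.1, h⟩)
        _ ≤ volume (A' ∩ B) + volume ((G ⁻¹' A' ∩ cube) \ A') := measure_union_le _ _
        _ = volume (A' ∩ B) := by rw [hDk, add_zero]
    have hBc : (G ⁻¹' A' ∩ cube) ∩ B = G ⁻¹' A' ∩ B := by
      rw [inter_assoc, inter_eq_self_of_subset_right hBsub]
    rw [hstep, hBc, hpb, hA'cube]
  -- volume of boxes
  have hvolbox : ∀ (κ : Fin n → ℕ) (a : Fin n → ℤ),
      volume (Set.univ.pi (fun i => Ico ((a i : ℝ)/s^(κ i)) (((a i : ℝ)+1)/s^(κ i))))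
        = ∏ i, ((s:ℝ≥0∞)^(κ i))⁻¹ := by
    intro κ a
    rw [volume_pi, Measure.pi_pi]
    exact Finset.prod_congr rfl fun i _ => adic_Ico_vol s hs (κ i) (a i)
  -- measure equality via Dynkin
  haveI hfin : IsFiniteMeasure (volume.restrict A') :=
    ⟨by rw [Measure.restrict_apply_univ]; exact lt_of_le_of_lt hvolA'le ENNReal.one_lt_top⟩
  have hext : volume.restrict A' = volume A' • volume.restrict cube := by
    refine ext_of_generate_finite _ (box_gen n s hs) (box_pi n s hs) ?_ ?_
    · rintro B ⟨t, ht, rfl⟩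
      choose κ a hta using fun i => ht i (Set.mem_univ i)
      have htm : ∀ i, MeasurableSet (t i) := fun i => (hta i) ▸ measurableSet_Ico
      have hBm : MeasurableSet (Set.univ.pi t) := MeasurableSet.univ_pi htm
      rw [Measure.restrict_apply hBm, Measure.smul_apply, smul_eq_mul,
        Measure.restrict_apply hBm]
      rcases (Set.univ.pi t ∩ cube).eq_empty_or_nonempty with hemp | hne
      · rw [hemp]
        have : Set.univ.pi t ∩ A' = ∅ := by
          rw [← subset_empty_iff, ← hemp]
          exact inter_subset_inter_right _ hA'sub
        rw [this]
        simp
      · have hIadic : I ∈ adicC s := ⟨0, 0, by norm_num [hI]⟩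
        have hint : ∀ i, (t i ∩ I).Nonempty := by
          intro i
          obtain ⟨X, hX1, hX2⟩ := hne
          exact ⟨X i, (Set.mem_univ_pi.1 hX1) i, (Set.mem_univ_pi.1 hX2) i⟩
        have hmem : ∀ i, t i ∩ I ∈ adicC s := fun i =>
          adicC_pi s hs _ (hta i ▸ ⟨κ i, a i, rfl⟩) I hIadic (hint i)
        choose κ' a' h' using hmem
        have hBI : Set.univ.pi t ∩ cube = Set.univ.pi (fun i => t i ∩ I) := by
          rw [hcube, ← Set.pi_inter_distrib]
        have hBI2 : Set.univ.pi (fun i => t i ∩ I) =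
            Set.univ.pi (fun i => Ico ((a' i : ℝ)/s^(κ' i)) (((a' i : ℝ)+1)/s^(κ' i))) := by
          exact congrArg (Set.pi Set.univ) (funext fun i => h' i)
        have hBsub : Set.univ.pi (fun i => Ico ((a' i : ℝ)/s^(κ' i)) (((a' i : ℝ)+1)/s^(κ' i)))
            ⊆ cube := by
          rw [← hBI2, hcube]
          exact Set.pi_mono fun i _ => inter_subset_right
        have hAB : Set.univ.pi t ∩ A' = Set.univ.pi (fun i => t i ∩ I) ∩ A' := by
          ext X
          constructor
          · rintro ⟨h1, h2⟩
            refine ⟨?_, h2⟩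
            rw [← hBI]
            exact ⟨h1, hA'sub h2⟩
          · rintro ⟨h1, h2⟩
            exact ⟨Set.mem_univ_pi.2 fun i => ((Set.mem_univ_pi.1 h1) i).1, h2⟩
        rw [hAB, hBI2, inter_comm,
          key2 (Finset.univ.sup κ') κ' (fun i => Finset.le_sup (Finset.mem_univ i)) a' hBsub,
          hBI, hBI2, hvolbox κ' a', mul_comm]
    · rw [Measure.restrict_apply_univ, Measure.smul_apply, smul_eq_mul,
        Measure.restrict_apply_univ, hvolcube, mul_one]
  -- conclude
  have hE := congrArg (fun μ => μ (cube \ A')) hext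
  simp only [Measure.restrict_apply (hcubeM.diff hA'm), Measure.smul_apply, smul_eq_mul] at hE
  have h1 : (cube \ A') ∩ A' = ∅ := by
    ext X; simp only [mem_inter_iff, mem_diff, mem_empty_iff_false, iff_false]
    rintro ⟨⟨_, h⟩, h2⟩; exact h h2
  have h2 : (cube \ A') ∩ cube = cube \ A' := inter_eq_self_of_subset_left diff_subset
  rw [h1, h2, measure_empty] at hE
  have h3 : volume (cube \ A') = 1 - volume A' := by
    rw [measure_diff hA'sub hA'm.nullMeasurableSet
      (lt_of_le_of_lt hvolA'le ENNReal.one_lt_top).ne, hvolcube]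
  rw [h3] at hE
  rcases mul_eq_zero.1 hE.symm with h | h
  · left; rw [← hvolA', h]
  · right
    rw [← hvolA']
    exact le_antisymm hvolA'le (tsub_eq_zero_iff_le.1 h)
end

section
/- Let n ≥ 1 and let A ⊆ 𝕀^n be a Lebesgue measurable set such that for every line L parallel to one of the n coordinate axes (i.e., for every index i ∈ {1,…,n} and every choice of fixed values in 𝕀 for the coordinates other than i), the one-dimensional Lebesgue measure of the section A ∩ L equals 0 or 1. Then M_n(A) = 0 or M_n(A) = 1. -/
open MeasureTheory
open scoped ENNReal

lemma cross_insertNth_update {n : ℕ} (i : Fin (n+1)) (x : ℝ) (f : Fin n → ℝ)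
    (j : Fin n) (y : ℝ) :
    (i.insertNth x (Function.update f j y) : Fin (n+1) → ℝ) =
      Function.update (i.insertNth x f : Fin (n+1) → ℝ) (i.succAbove j) y := by
  ext k
  rcases eq_or_ne k (i.succAbove j) with rfl | hk
  · simp
  · rcases eq_or_ne k i with rfl | hki
    · rw [Function.update_of_ne hk, Fin.insertNth_apply_same, Fin.insertNth_apply_same]
    · obtain ⟨m, rfl⟩ := Fin.exists_succAbove_eq hki
      have hmj : m ≠ j := fun hmj => hk (by rw [hmj])
      rw [Function.update_of_ne hk, Fin.insertNth_apply_succAbove,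
        Fin.insertNth_apply_succAbove, Function.update_of_ne hmj]

lemma cross_dim2 {S : Set (ℝ × ℝ)} (hS : MeasurableSet S)
    (hsub : S ⊆ Set.Icc 0 1 ×ˢ Set.Icc 0 1)
    (hvert : ∀ x ∈ Set.Icc (0:ℝ) 1,
      volume {y : ℝ | (x, y) ∈ S} = 0 ∨ volume {y : ℝ | (x, y) ∈ S} = 1)
    (hhor : ∀ y ∈ Set.Icc (0:ℝ) 1,
      volume {x : ℝ | (x, y) ∈ S} = 0 ∨ volume {x : ℝ | (x, y) ∈ S} = 1) :
    volume S = 0 ∨ volume S = 1 := by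
  have hIcc : volume (Set.Icc (0:ℝ) 1) = 1 := by simp
  set g : ℝ → ℝ≥0∞ := fun x => volume (Prod.mk x ⁻¹' S) with hgdef
  set h : ℝ → ℝ≥0∞ := fun y => volume ((fun x => (x, y)) ⁻¹' S) with hhdef
  have hgm : Measurable g := measurable_measure_prodMk_left hS
  have hhm : Measurable h := measurable_measure_prodMk_right hS
  have hg0 : ∀ x, x ∉ Set.Icc (0:ℝ) 1 → g x = 0 := by
    intro x hx
    have hemp : Prod.mk x ⁻¹' S = ∅ := by
      ext y
      simp only [Set.mem_preimage, Set.mem_empty_iff_false, iff_false]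
      exact fun hy => hx (hsub hy).1
    simp [hgdef, hemp]
  have hh0 : ∀ y, y ∉ Set.Icc (0:ℝ) 1 → h y = 0 := by
    intro y hy
    have hemp : ((fun x => (x, y)) ⁻¹' S) = ∅ := by
      ext x
      simp only [Set.mem_preimage, Set.mem_empty_iff_false, iff_false]
      exact fun hx => hy (hsub hx).2
    simp [hhdef, hemp]
  have hg01 : ∀ x, g x = 0 ∨ g x = 1 := by
    intro x
    by_cases hx : x ∈ Set.Icc (0:ℝ) 1
    · exact hvert x hx
    · exact Or.inl (hg0 x hx)
  have hh01 : ∀ y, h y = 0 ∨ h y = 1 := by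
    intro y
    by_cases hy : y ∈ Set.Icc (0:ℝ) 1
    · exact hhor y hy
    · exact Or.inl (hh0 y hy)
  set T : Set ℝ := {x | g x = 1} with hTdef
  set U : Set ℝ := {y | h y = 1} with hUdef
  have hTm : MeasurableSet T := hgm (measurableSet_singleton 1)
  have hUm : MeasurableSet U := hhm (measurableSet_singleton 1)
  have hTsub : T ⊆ Set.Icc (0:ℝ) 1 := by
    intro x hx
    by_contra hc
    rw [Set.mem_setOf_eq, hg0 x hc] at hx
    exact zero_ne_one hx
  have hUsub : U ⊆ Set.Icc (0:ℝ) 1 := by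
    intro y hy
    by_contra hc
    rw [Set.mem_setOf_eq, hh0 y hc] at hy
    exact zero_ne_one hy
  have hUfin : volume U ≠ ⊤ := by
    refine ne_top_of_le_ne_top ?_ (measure_mono hUsub)
    rw [hIcc]; exact ENNReal.one_ne_top
  have hgind : g = T.indicator (fun _ => 1) := by
    funext x
    by_cases hx : x ∈ T
    · rw [Set.indicator_of_mem hx]; exact hx
    · rw [Set.indicator_of_notMem hx]
      rcases hg01 x with h0 | h1
      · exact h0
      · exact absurd h1 hx
  have hhind : h = U.indicator (fun _ => 1) := by
    funext y
    by_cases hy : y ∈ U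
    · rw [Set.indicator_of_mem hy]; exact hy
    · rw [Set.indicator_of_notMem hy]
      rcases hh01 y with h0 | h1
      · exact h0
      · exact absurd h1 hy
  have hvolT : volume S = volume T := by
    rw [Measure.volume_eq_prod, Measure.prod_apply hS]
    calc ∫⁻ x, volume (Prod.mk x ⁻¹' S) = ∫⁻ x, T.indicator (fun _ => 1) x := by
          rw [show (fun x => volume (Prod.mk x ⁻¹' S)) = T.indicator (fun _ => 1) from hgind]
      _ = 1 * volume T := lintegral_indicator_const hTm 1
      _ = volume T := one_mul _
  have hvolU : volume S = volume U := by
    rw [Measure.volume_eq_prod, Measure.prod_apply_symm hS]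
    calc ∫⁻ y, volume ((fun x => (x, y)) ⁻¹' S) = ∫⁻ y, U.indicator (fun _ => 1) y := by
          rw [show (fun y => volume ((fun x => (x, y)) ⁻¹' S)) = U.indicator (fun _ => 1) from hhind]
      _ = 1 * volume U := lintegral_indicator_const hUm 1
      _ = volume U := one_mul _
  set S' : Set (ℝ × ℝ) := S ∩ T ×ˢ Uᶜ with hS'def
  have hS'm : MeasurableSet S' := hS.inter (hTm.prod hUm.compl)
  have hS'0 : volume S' = 0 := by
    rw [Measure.volume_eq_prod, Measure.prod_apply_symm hS'm]
    have hsec : ∀ y, volume ((fun x => (x, y)) ⁻¹' S') = 0 := by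
      intro y
      by_cases hy : y ∈ U
      · have hemp : ((fun x => (x, y)) ⁻¹' S') = ∅ := by
          ext x
          simp only [Set.mem_preimage, Set.mem_empty_iff_false, iff_false, hS'def,
            Set.mem_inter_iff, Set.mem_prod, Set.mem_compl_iff, not_and, and_imp]
          intro _ _
          exact fun hc => hc hy
        simp [hemp]
      · have hle : ((fun x => (x, y)) ⁻¹' S') ⊆ ((fun x => (x, y)) ⁻¹' S) :=
          fun x hx => hx.1
        have hzero : h y = 0 := by
          rcases hh01 y with h0 | h1
          · exact h0
          · exact absurd h1 hy
        exact le_antisymm ((measure_mono hle).trans hzero.le) zero_le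
    simp only [hsec]
    exact lintegral_zero
  have hlow : (1 - volume U) * volume T ≤ volume S' := by
    rw [Measure.volume_eq_prod, Measure.prod_apply hS'm]
    have hpt : ∀ x, T.indicator (fun _ => 1 - volume U) x ≤ volume (Prod.mk x ⁻¹' S') := by
      intro x
      by_cases hx : x ∈ T
      · rw [Set.indicator_of_mem hx]
        have hsec : Prod.mk x ⁻¹' S' = (Prod.mk x ⁻¹' S) ∩ Uᶜ := by
          ext y
          simp only [Set.mem_preimage, hS'def, Set.mem_inter_iff, Set.mem_prod,
            Set.mem_compl_iff]
          tauto
        have hsubx : Prod.mk x ⁻¹' S ⊆ Set.Icc (0:ℝ) 1 := fun y hy => (hsub hy).2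
        have hxm : MeasurableSet (Prod.mk x ⁻¹' S) := measurable_prodMk_left hS
        have hfull : volume (Prod.mk x ⁻¹' S) = 1 := hx
        have hdiff : volume (Set.Icc (0:ℝ) 1 \ Prod.mk x ⁻¹' S) = 0 := by
          rw [measure_diff hsubx hxm.nullMeasurableSet (by rw [hfull]; exact ENNReal.one_ne_top),
            hfull, hIcc, tsub_self]
        have hcover : (Set.Icc (0:ℝ) 1 \ U) ⊆
            (Prod.mk x ⁻¹' S ∩ Uᶜ) ∪ (Set.Icc (0:ℝ) 1 \ Prod.mk x ⁻¹' S) := by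
          intro y hy
          by_cases hyS : y ∈ Prod.mk x ⁻¹' S
          · exact Or.inl ⟨hyS, hy.2⟩
          · exact Or.inr ⟨hy.1, hyS⟩
        have h1 : volume (Set.Icc (0:ℝ) 1 \ U) ≤ volume (Prod.mk x ⁻¹' S ∩ Uᶜ) := by
          calc volume (Set.Icc (0:ℝ) 1 \ U)
              ≤ volume (Prod.mk x ⁻¹' S ∩ Uᶜ) + volume (Set.Icc (0:ℝ) 1 \ Prod.mk x ⁻¹' S) :=
                (measure_mono hcover).trans (measure_union_le _ _)
            _ = volume (Prod.mk x ⁻¹' S ∩ Uᶜ) := by rw [hdiff, add_zero]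
        have h2 : 1 - volume U ≤ volume (Set.Icc (0:ℝ) 1 \ U) := by
          rw [measure_diff hUsub hUm.nullMeasurableSet hUfin, hIcc]
        rw [hsec]
        exact h2.trans h1
      · rw [Set.indicator_of_notMem hx]; exact zero_le
    calc (1 - volume U) * volume T
        = ∫⁻ x, T.indicator (fun _ => 1 - volume U) x := (lintegral_indicator_const hTm _).symm
      _ ≤ ∫⁻ x, volume (Prod.mk x ⁻¹' S') := lintegral_mono hpt
  have hzero : (1 - volume U) * volume T = 0 :=
    le_antisymm (hS'0 ▸ hlow) zero_le
  rcases mul_eq_zero.1 hzero with h1 | h2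
  · right
    have hU1 : 1 ≤ volume U := tsub_eq_zero_iff_le.mp h1
    have hUle : volume U ≤ 1 := by
      calc volume U ≤ volume (Set.Icc (0:ℝ) 1) := measure_mono hUsub
        _ = 1 := hIcc
    rw [hvolU]
    exact le_antisymm hUle hU1
  · left
    rw [hvolT, h2]

lemma cross_main : ∀ (n : ℕ) (A : Set (Fin n → ℝ)),
    A ⊆ {X | ∀ i, X i ∈ Set.Icc (0 : ℝ) 1} → MeasurableSet A →
    (∀ (i : Fin n) (y : Fin n → ℝ), (∀ j, y j ∈ Set.Icc (0 : ℝ) 1) →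
      volume {t : ℝ | t ∈ Set.Icc (0 : ℝ) 1 ∧ Function.update y i t ∈ A} = 0 ∨
      volume {t : ℝ | t ∈ Set.Icc (0 : ℝ) 1 ∧ Function.update y i t ∈ A} = 1) →
    volume A = 0 ∨ volume A = 1 := by
  intro n
  induction n with
  | zero =>
    intro A _ _ _
    rcases Set.eq_empty_or_nonempty A with rfl | ⟨a, ha⟩
    · left; simp
    · right
      have hA : A = Set.univ := Set.eq_univ_of_forall fun x => (Subsingleton.elim a x) ▸ ha
      rw [hA, volume_pi, Measure.pi_univ]
      simp
  | succ n ih =>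
    intro A hAsub hAmeas hlines
    classical
    have hmem : ∀ (t : ℝ) (y : Fin n → ℝ),
        (Fin.insertNth 0 t y : Fin (n+1) → ℝ) ∈ A →
        t ∈ Set.Icc (0:ℝ) 1 ∧ ∀ j, y j ∈ Set.Icc (0:ℝ) 1 := by
      intro t y hty
      have h := hAsub hty
      constructor
      · have h0 := h 0
        rwa [Fin.insertNth_apply_same] at h0
      · intro j
        have hj := h ((0 : Fin (n+1)).succAbove j)
        rwa [Fin.insertNth_apply_succAbove] at hj
    set E : Set (ℝ × (Fin n → ℝ)) :=
      {p | (Fin.insertNth 0 p.1 p.2 : Fin (n+1) → ℝ) ∈ A} with hEdef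
    have hins : Measurable fun p : ℝ × (Fin n → ℝ) =>
        (Fin.insertNth 0 p.1 p.2 : Fin (n+1) → ℝ) := by
      rw [measurable_pi_iff]
      intro k
      rcases eq_or_ne k 0 with rfl | hk
      · simpa using measurable_fst
      · obtain ⟨m, rfl⟩ := Fin.exists_succAbove_eq hk
        simp only [Fin.insertNth_apply_succAbove]
        exact (measurable_pi_apply m).comp measurable_snd
    have hEm : MeasurableSet E := hins hAmeas
    have hAE : volume A = ((volume : Measure ℝ).prod (volume : Measure (Fin n → ℝ))) E := by
      have hmp := (measurePreserving_piFinSuccAbove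
        (fun _ : Fin (n+1) => (volume : Measure ℝ)) 0).symm
      have hEA : E = (MeasurableEquiv.piFinSuccAbove (fun _ : Fin (n+1) => ℝ) 0).symm ⁻¹' A := by
        ext p
        simp [hEdef, MeasurableEquiv.piFinSuccAbove_symm_apply, Fin.insertNthEquiv]
      calc volume A = Measure.pi (fun _ : Fin (n+1) => (volume : Measure ℝ)) A := by
            rw [volume_pi]
        _ = ((volume : Measure ℝ).prod (Measure.pi fun _ : Fin n => (volume : Measure ℝ)))
            ((MeasurableEquiv.piFinSuccAbove (fun _ : Fin (n+1) => ℝ) 0).symm ⁻¹' A) :=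
            (hmp.measure_preimage hAmeas.nullMeasurableSet).symm
        _ = ((volume : Measure ℝ).prod (volume : Measure (Fin n → ℝ))) E := by
            rw [← hEA, ← volume_pi]
    set f : (Fin n → ℝ) → ℝ≥0∞ := fun y => volume ((fun t => (t, y)) ⁻¹' E) with hfdef
    have hfm : Measurable f := measurable_measure_prodMk_right hEm
    have hf0 : ∀ y, ¬(∀ j, y j ∈ Set.Icc (0:ℝ) 1) → f y = 0 := by
      intro y hy
      have hemp : ((fun t : ℝ => (t, y)) ⁻¹' E) = ∅ := by
        ext t
        simp only [Set.mem_preimage, Set.mem_empty_iff_false, iff_false]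
        exact fun ht => hy (hmem t y ht).2
      simp [hfdef, hemp]
    have hf01 : ∀ y, f y = 0 ∨ f y = 1 := by
      intro y
      by_cases hy : ∀ j, y j ∈ Set.Icc (0:ℝ) 1
      · have hbase : ∀ k, (Fin.insertNth 0 (0:ℝ) y : Fin (n+1) → ℝ) k ∈ Set.Icc (0:ℝ) 1 := by
          intro k
          rcases eq_or_ne k 0 with rfl | hk
          · rw [Fin.insertNth_apply_same]
            exact Set.left_mem_Icc.2 zero_le_one
          · obtain ⟨m, rfl⟩ := Fin.exists_succAbove_eq hk
            rw [Fin.insertNth_apply_succAbove]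
            exact hy m
        have hset : {t : ℝ | t ∈ Set.Icc (0:ℝ) 1 ∧
            Function.update (Fin.insertNth 0 (0:ℝ) y : Fin (n+1) → ℝ) 0 t ∈ A}
            = (fun t : ℝ => (t, y)) ⁻¹' E := by
          ext t
          simp only [Set.mem_setOf_eq, Fin.update_insertNth, Set.mem_preimage, hEdef]
          constructor
          · exact fun h => h.2
          · exact fun h => ⟨(hmem t y h).1, h⟩
        rcases hlines 0 _ hbase with h0 | h1
        · left
          show volume ((fun t : ℝ => (t, y)) ⁻¹' E) = 0
          rw [← hset]; exact h0
        · right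
          show volume ((fun t : ℝ => (t, y)) ⁻¹' E) = 1
          rw [← hset]; exact h1
      · exact Or.inl (hf0 y hy)
    set B : Set (Fin n → ℝ) := {y | f y = 1} with hBdef
    have hBm : MeasurableSet B := hfm (measurableSet_singleton 1)
    have hBsub : B ⊆ {X : Fin n → ℝ | ∀ i, X i ∈ Set.Icc (0:ℝ) 1} := by
      intro y hy
      by_contra hc
      exact zero_ne_one ((hf0 y hc).symm.trans hy)
    have hfind : f = B.indicator (fun _ => 1) := by
      funext y
      by_cases hy : y ∈ B
      · rw [Set.indicator_of_mem hy]; exact hy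
      · rw [Set.indicator_of_notMem hy]
        rcases hf01 y with h0 | h1
        · exact h0
        · exact absurd h1 hy
    have hAB : volume A = volume B := by
      rw [hAE, Measure.prod_apply_symm hEm]
      calc ∫⁻ y, volume ((fun t : ℝ => (t, y)) ⁻¹' E)
          = ∫⁻ y, B.indicator (fun _ => 1) y := by
            rw [show (fun y => volume ((fun t : ℝ => (t, y)) ⁻¹' E))
              = B.indicator (fun _ => 1) from hfind]
        _ = 1 * volume B := lintegral_indicator_const hBm 1
        _ = volume B := one_mul _
    have hBlines : ∀ (j : Fin n) (z : Fin n → ℝ), (∀ k, z k ∈ Set.Icc (0:ℝ) 1) →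
        volume {t : ℝ | t ∈ Set.Icc (0:ℝ) 1 ∧ Function.update z j t ∈ B} = 0 ∨
        volume {t : ℝ | t ∈ Set.Icc (0:ℝ) 1 ∧ Function.update z j t ∈ B} = 1 := by
      intro j z hz
      set S : Set (ℝ × ℝ) := {p | p.1 ∈ Set.Icc (0:ℝ) 1 ∧ p.2 ∈ Set.Icc (0:ℝ) 1 ∧
          (Fin.insertNth 0 p.2 (Function.update z j p.1) : Fin (n+1) → ℝ) ∈ A} with hSdef
      have hSmap : Measurable fun p : ℝ × ℝ =>
          (Fin.insertNth 0 p.2 (Function.update z j p.1) : Fin (n+1) → ℝ) := by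
        have h1 : Measurable fun p : ℝ × ℝ =>
            ((p.2, Function.update z j p.1) : ℝ × (Fin n → ℝ)) :=
          measurable_snd.prodMk ((measurable_update z).comp measurable_fst)
        exact hins.comp h1
      have hSm : MeasurableSet S :=
        (measurable_fst measurableSet_Icc).inter
          ((measurable_snd measurableSet_Icc).inter (hSmap hAmeas))
      have hSsub : S ⊆ Set.Icc 0 1 ×ˢ Set.Icc 0 1 := fun p hp => ⟨hp.1, hp.2.1⟩
      have hvert : ∀ t ∈ Set.Icc (0:ℝ) 1,
          volume {s : ℝ | (t, s) ∈ S} = 0 ∨ volume {s : ℝ | (t, s) ∈ S} = 1 := by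
        intro t ht
        have hup : ∀ k, Function.update z j t k ∈ Set.Icc (0:ℝ) 1 := by
          intro k
          rcases eq_or_ne k j with rfl | hkj
          · rw [Function.update_self]; exact ht
          · rw [Function.update_of_ne hkj]; exact hz k
        have hbase : ∀ k, (Fin.insertNth 0 (0:ℝ) (Function.update z j t) : Fin (n+1) → ℝ) k
            ∈ Set.Icc (0:ℝ) 1 := by
          intro k
          rcases eq_or_ne k 0 with rfl | hk
          · rw [Fin.insertNth_apply_same]
            exact Set.left_mem_Icc.2 zero_le_one
          · obtain ⟨m, rfl⟩ := Fin.exists_succAbove_eq hk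
            rw [Fin.insertNth_apply_succAbove]
            exact hup m
        have hset : {s : ℝ | (t, s) ∈ S} = {s : ℝ | s ∈ Set.Icc (0:ℝ) 1 ∧
            Function.update (Fin.insertNth 0 (0:ℝ) (Function.update z j t) : Fin (n+1) → ℝ)
              0 s ∈ A} := by
          ext s
          simp only [hSdef, Set.mem_setOf_eq, Fin.update_insertNth]
          constructor
          · rintro ⟨-, hs, hA⟩; exact ⟨hs, hA⟩
          · rintro ⟨hs, hA⟩; exact ⟨ht, hs, hA⟩
        rw [hset]
        exact hlines 0 _ hbase
      have hhor : ∀ s ∈ Set.Icc (0:ℝ) 1,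
          volume {t : ℝ | (t, s) ∈ S} = 0 ∨ volume {t : ℝ | (t, s) ∈ S} = 1 := by
        intro s hs
        have hbase : ∀ k, (Fin.insertNth 0 s z : Fin (n+1) → ℝ) k ∈ Set.Icc (0:ℝ) 1 := by
          intro k
          rcases eq_or_ne k 0 with rfl | hk
          · rw [Fin.insertNth_apply_same]; exact hs
          · obtain ⟨m, rfl⟩ := Fin.exists_succAbove_eq hk
            rw [Fin.insertNth_apply_succAbove]
            exact hz m
        have hset : {t : ℝ | (t, s) ∈ S} = {t : ℝ | t ∈ Set.Icc (0:ℝ) 1 ∧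
            Function.update (Fin.insertNth 0 s z : Fin (n+1) → ℝ)
              ((0 : Fin (n+1)).succAbove j) t ∈ A} := by
          ext t
          simp only [hSdef, Set.mem_setOf_eq, ← cross_insertNth_update]
          constructor
          · rintro ⟨ht, -, hA⟩; exact ⟨ht, hA⟩
          · rintro ⟨ht, hA⟩; exact ⟨ht, hs, hA⟩
        rw [hset]
        exact hlines ((0 : Fin (n+1)).succAbove j) _ hbase
      have hS01 := cross_dim2 hSm hSsub hvert hhor
      have hφm : Measurable fun t : ℝ => volume (Prod.mk t ⁻¹' S) :=
        measurable_measure_prodMk_left hSm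
      have hφIcc : ∀ t ∈ Set.Icc (0:ℝ) 1,
          volume (Prod.mk t ⁻¹' S) = f (Function.update z j t) := by
        intro t ht
        have hpre : Prod.mk t ⁻¹' S = (fun s : ℝ => (s, Function.update z j t)) ⁻¹' E := by
          ext s
          simp only [Set.mem_preimage, hSdef, hEdef, Set.mem_setOf_eq]
          constructor
          · rintro ⟨-, -, hA⟩; exact hA
          · intro hA; exact ⟨ht, (hmem s _ hA).1, hA⟩
        rw [hfdef, hpre]
      have hφ0 : ∀ t, t ∉ Set.Icc (0:ℝ) 1 → volume (Prod.mk t ⁻¹' S) = 0 := by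
        intro t ht
        have hemp : Prod.mk t ⁻¹' S = ∅ := by
          ext s
          simp only [Set.mem_preimage, Set.mem_empty_iff_false, iff_false, hSdef,
            Set.mem_setOf_eq]
          exact fun hc => ht hc.1
        simp [hemp]
      set W : Set ℝ := {t | volume (Prod.mk t ⁻¹' S) = 1} with hWdef
      have hWm : MeasurableSet W := hφm (measurableSet_singleton 1)
      have hWeq : W = {t : ℝ | t ∈ Set.Icc (0:ℝ) 1 ∧ Function.update z j t ∈ B} := by
        ext t
        simp only [hWdef, hBdef, Set.mem_setOf_eq]
        constructor
        · intro h1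
          have ht : t ∈ Set.Icc (0:ℝ) 1 := by
            by_contra hc
            rw [hφ0 t hc] at h1
            exact zero_ne_one h1
          exact ⟨ht, (hφIcc t ht).symm.trans h1⟩
        · rintro ⟨ht, hB⟩
          rw [hφIcc t ht]
          exact hB
      have hφ01 : ∀ t, volume (Prod.mk t ⁻¹' S) = 0 ∨ volume (Prod.mk t ⁻¹' S) = 1 := by
        intro t
        by_cases ht : t ∈ Set.Icc (0:ℝ) 1
        · rw [hφIcc t ht]; exact hf01 _
        · exact Or.inl (hφ0 t ht)
      have hφind : (fun t : ℝ => volume (Prod.mk t ⁻¹' S)) = W.indicator (fun _ => 1) := by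
        funext t
        by_cases htW : t ∈ W
        · rw [Set.indicator_of_mem htW]; exact htW
        · rw [Set.indicator_of_notMem htW]
          rcases hφ01 t with h0 | h1
          · exact h0
          · exact absurd h1 htW
      have hvolS : volume S = volume W := by
        rw [Measure.volume_eq_prod, Measure.prod_apply hSm]
        rw [show (fun t : ℝ => volume (Prod.mk t ⁻¹' S)) = W.indicator (fun _ => 1) from hφind]
        rw [lintegral_indicator_const hWm, one_mul]
      rw [← hWeq, ← hvolS]
      exact hS01
    rw [hAB]
    exact ih B hBsub hBm hBlines

theorem cross_fibering_lines (n : ℕ) (hn : 1 ≤ n) (A : Set (Fin n → ℝ))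
    (hAsub : A ⊆ {X | ∀ i, X i ∈ Set.Icc (0 : ℝ) 1})
    (hAmeas : MeasurableSet A)
    (hlines : ∀ (i : Fin n) (y : Fin n → ℝ), (∀ j, y j ∈ Set.Icc (0 : ℝ) 1) →
      volume {t : ℝ | t ∈ Set.Icc (0 : ℝ) 1 ∧ Function.update y i t ∈ A} = 0 ∨
      volume {t : ℝ | t ∈ Set.Icc (0 : ℝ) 1 ∧ Function.update y i t ∈ A} = 1) :
    volume A = 0 ∨ volume A = 1 :=
  cross_main n A hAsub hAmeas hlines
end

section
/- Let n, m ≥ 1 and view 𝕀^{nm} as the product of m coordinate planes 𝕀^n, writing points as (X^{(1)},…,X^{(m)}) with each X^{(j)} ∈ 𝕀^n. Let A ⊆ 𝕀^{nm} be a Lebesgue measurable set such that for every n-dimensional plane Π parallel to one of the m coordinate planes (i.e., for every index j ∈ {1,…,m} and every choice of fixed values in 𝕀^n for the blocks X^{(i)} with i ≠ j), the n-dimensional Lebesgue measure of the section A ∩ Π equals 0 or 1. Then M_{nm}(A) = 0 or M_{nm}(A) = 1. -/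
open MeasureTheory
open scoped ENNReal

section TwoDim

variable {α β : Type*} [MeasurableSpace α] [MeasurableSpace β]

/-- Fubini computation: if a.e. vertical section of `C` has measure `0` or `1`,
then the product measure of `C` equals the measure of the base set where sections
have full measure. -/
private lemma base_eq (μ : Measure α) (ν : Measure β) [SigmaFinite ν]
    (C : Set (α × β)) (hC : MeasurableSet C)
    (hv : ∀ᵐ x ∂μ, ν (Prod.mk x ⁻¹' C) = 0 ∨ ν (Prod.mk x ⁻¹' C) = 1) :
    μ.prod ν C = μ {x | ν (Prod.mk x ⁻¹' C) = 1} := by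
  have hf : Measurable fun x => ν (Prod.mk x ⁻¹' C) := measurable_measure_prodMk_left hC
  have hB : MeasurableSet {x | ν (Prod.mk x ⁻¹' C) = 1} := hf (measurableSet_singleton 1)
  rw [Measure.prod_apply hC, ← lintegral_indicator_one hB]
  refine lintegral_congr_ae ?_
  filter_upwards [hv] with x hx
  rcases hx with h0 | h1
  · have hxB : x ∉ {x | ν (Prod.mk x ⁻¹' C) = 1} := by simp [h0]
    simp [Set.indicator_of_notMem hxB, h0]
  · simp [Set.indicator_of_mem (h1 : x ∈ {x | ν (Prod.mk x ⁻¹' C) = 1}), h1]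

/-- The two-dimensional zero-one law: if a.e. vertical and a.e. horizontal section of a
measurable set in a product of probability spaces has measure `0` or `1`, then the set
has product measure `0` or `1`. -/
private lemma two_dim (μ : Measure α) (ν : Measure β)
    [IsProbabilityMeasure μ] [IsProbabilityMeasure ν]
    (C : Set (α × β)) (hC : MeasurableSet C)
    (hv : ∀ᵐ x ∂μ, ν (Prod.mk x ⁻¹' C) = 0 ∨ ν (Prod.mk x ⁻¹' C) = 1)
    (hh : ∀ᵐ y ∂ν, μ ((fun x => (x, y)) ⁻¹' C) = 0 ∨ μ ((fun x => (x, y)) ⁻¹' C) = 1) :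
    μ.prod ν C = 0 ∨ μ.prod ν C = 1 := by
  set B := {x | ν (Prod.mk x ⁻¹' C) = 1} with hBdef
  have hf : Measurable fun x => ν (Prod.mk x ⁻¹' C) := measurable_measure_prodMk_left hC
  have hB : MeasurableSet B := hf (measurableSet_singleton 1)
  have key : μ.prod ν C = μ B := base_eq μ ν C hC hv
  have hBu : MeasurableSet (B ×ˢ (Set.univ : Set β)) := hB.prod MeasurableSet.univ
  set D := (C \ B ×ˢ Set.univ) ∪ (B ×ˢ Set.univ \ C) with hDdef
  have hD : MeasurableSet D := (hC.diff hBu).union (hBu.diff hC)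
  have hD0 : μ.prod ν D = 0 := by
    rw [Measure.prod_apply hD]
    have hae : ∀ᵐ x ∂μ, ν (Prod.mk x ⁻¹' D) = 0 := by
      filter_upwards [hv] with x hx
      by_cases hxB : x ∈ B
      · have h1 : ν (Prod.mk x ⁻¹' C) = 1 := hxB
        have hsec : Prod.mk x ⁻¹' D = Set.univ \ Prod.mk x ⁻¹' C := by
          ext y; simp [D, hxB]
        rw [hsec, measure_diff (Set.subset_univ _)
          ((measurable_prodMk_left hC).nullMeasurableSet) (by simp [h1]),
          measure_univ, h1, tsub_self]
      · have h0 : ν (Prod.mk x ⁻¹' C) = 0 := hx.resolve_right hxB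
        have hsec : Prod.mk x ⁻¹' D = Prod.mk x ⁻¹' C := by
          ext y; simp [D, hxB]
        rw [hsec, h0]
    rw [lintegral_congr_ae hae, lintegral_zero]
  have hsections : ∀ᵐ y ∂ν, μ ((fun x => (x, y)) ⁻¹' D) = 0 := by
    have h1 : μ.prod ν D = ∫⁻ y, μ ((fun x => (x, y)) ⁻¹' D) ∂ν := Measure.prod_apply_symm hD
    have hmeas : Measurable fun y => μ ((fun x => (x, y)) ⁻¹' D) :=
      measurable_measure_prodMk_right hD
    rw [hD0] at h1
    exact (lintegral_eq_zero_iff hmeas).mp h1.symm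
  haveI : (MeasureTheory.ae ν).NeBot := ae_neBot.mpr (IsProbabilityMeasure.ne_zero ν)
  obtain ⟨y, hy1, hy2⟩ := (hh.and hsections).exists
  have hsec : (fun x => (x, y)) ⁻¹' D =
      ((fun x => (x, y)) ⁻¹' C \ B) ∪ (B \ (fun x => (x, y)) ⁻¹' C) := by
    ext x; simp [D]
  rw [hsec] at hy2
  obtain ⟨hd1, hd2⟩ := measure_union_null_iff.mp hy2
  have hCyB : μ ((fun x => (x, y)) ⁻¹' C) = μ B :=
    measure_congr (MeasureTheory.ae_eq_set.mpr ⟨hd1, hd2⟩)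
  rw [key, ← hCyB]
  exact hy1

end TwoDim

section PiSplit

variable {β : Type*} [MeasurableSpace β] {ι : Type*} [Fintype ι] [DecidableEq ι]

/-- The measurable equivalence splitting off the `j`-th coordinate of a function space. -/
noncomputable def splitAt (β : Type*) [MeasurableSpace β] {ι : Type*} [DecidableEq ι] (j : ι) :
    (ι → β) ≃ᵐ β × ({i : ι // ¬ i = j} → β) :=
  (MeasurableEquiv.piEquivPiSubtypeProd (fun _ : ι => β) (fun i => i = j)).trans
    ((MeasurableEquiv.funUnique {i : ι // i = j} β).prodCongr (MeasurableEquiv.refl _))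

lemma splitAt_symm_apply (j : ι) (y : β) (z : {i : ι // ¬ i = j} → β) (i : ι) :
    (splitAt β j).symm (y, z) i = if h : i = j then y else z ⟨i, h⟩ := rfl

lemma splitAt_apply (j : ι) (x : ι → β) :
    splitAt β j x = (x j, fun i => x i.1) := rfl

lemma update_eq_splitAt_symm (j : ι) (x : ι → β) (Y : β) :
    Function.update x j Y = (splitAt β j).symm (Y, fun i => x i.1) := by
  funext i
  rw [splitAt_symm_apply]
  by_cases h : i = j
  · subst h; simp
  · simp [Function.update_of_ne h, h]

lemma restr_splitAt_symm (j : ι) (y : β) (z : {i : ι // ¬ i = j} → β) :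
    (fun i : {i : ι // ¬ i = j} => (splitAt β j).symm (y, z) i.1) = z := by
  funext i
  rw [splitAt_symm_apply]
  exact dif_neg i.2

lemma update_splitAt_symm (j : ι) (y : β) (z : {i : ι // ¬ i = j} → β)
    (k : {i : ι // ¬ i = j}) (Y : β) :
    Function.update ((splitAt β j).symm (y, z)) k.1 Y
      = (splitAt β j).symm (y, Function.update z k Y) := by
  funext i
  rw [splitAt_symm_apply]
  by_cases h : i = k.1
  · subst h
    rw [Function.update_self, dif_neg k.2]
    have : (⟨k.1, k.2⟩ : {i : ι // ¬ i = j}) = k := Subtype.ext rfl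
    rw [this, Function.update_self]
  · rw [Function.update_of_ne h, splitAt_symm_apply]
    by_cases hij : i = j
    · rw [dif_pos hij, dif_pos hij]
    · rw [dif_neg hij, dif_neg hij, Function.update_of_ne]
      exact fun hc => h (congrArg Subtype.val hc)

variable (ν : Measure β) [IsProbabilityMeasure ν]

lemma mp_splitAt (j : ι) :
    MeasurePreserving (splitAt β j) (Measure.pi fun _ : ι => ν)
      (ν.prod (Measure.pi fun _ : {i : ι // ¬ i = j} => ν)) := by
  have h0 := measurePreserving_piEquivPiSubtypeProd (fun _ : ι => ν) (fun i => i = j)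
  have h1 := (measurePreserving_funUnique ν {i : ι // i = j}).prod
    (MeasurePreserving.id (Measure.pi fun _ : {i : ι // ¬ i = j} => ν))
  have hF : (Subtype.fintype fun i : ι => i = j) = (Unique.fintype : Fintype {i : ι // i = j}) :=
    Subsingleton.elim _ _
  rw [hF] at h0
  exact h1.comp h0

lemma mp_restr (j : ι) :
    MeasurePreserving (fun x : ι → β => (fun i : {i : ι // ¬ i = j} => x i.1))
      (Measure.pi fun _ : ι => ν) (Measure.pi fun _ : {i : ι // ¬ i = j} => ν) := by
  have hsnd : MeasurePreserving (Prod.snd)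
      (ν.prod (Measure.pi fun _ : {i : ι // ¬ i = j} => ν))
      (Measure.pi fun _ : {i : ι // ¬ i = j} => ν) :=
    ⟨measurable_snd, Measure.snd_prod⟩
  exact hsnd.comp (mp_splitAt ν j)

lemma mp_update (j : ι) :
    MeasurePreserving (fun p : (ι → β) × β => Function.update p.1 j p.2)
      ((Measure.pi fun _ : ι => ν).prod ν) (Measure.pi fun _ : ι => ν) := by
  have heq : (fun p : (ι → β) × β => Function.update p.1 j p.2)
      = (splitAt β j).symm ∘ (Prod.map id (fun x : ι → β => (fun i : {i : ι // ¬ i = j} => x i.1)))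
        ∘ Prod.swap := by
    funext p
    exact update_eq_splitAt_symm j p.1 p.2
  rw [heq]
  exact ((mp_splitAt ν j).symm).comp
    (((MeasurePreserving.id ν).prod (mp_restr ν j)).comp Measure.measurePreserving_swap)

end PiSplit

section PiLemma

variable {β : Type*} [MeasurableSpace β]

private lemma zero_one_set_measurable {γ : Type*} [MeasurableSpace γ] {g : γ → ℝ≥0∞}
    (hg : Measurable g) : MeasurableSet {z | g z = 0 ∨ g z = 1} := by
  have : {z | g z = 0 ∨ g z = 1} = g ⁻¹' {0} ∪ g ⁻¹' {1} := by
    ext z; simp [Set.mem_preimage]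
  rw [this]
  exact (hg (measurableSet_singleton 0)).union (hg (measurableSet_singleton 1))

theorem pi_zero_one (ν : Measure β) [IsProbabilityMeasure ν] :
    ∀ (N : ℕ) (ι : Type) [Fintype ι] [DecidableEq ι], Fintype.card ι = N →
    ∀ (A : Set (ι → β)), MeasurableSet A →
    (∀ j : ι, ∀ᵐ x ∂(Measure.pi fun _ : ι => ν),
        ν {Y | Function.update x j Y ∈ A} = 0 ∨ ν {Y | Function.update x j Y ∈ A} = 1) →
    (Measure.pi (fun _ : ι => ν)) A = 0 ∨ (Measure.pi (fun _ : ι => ν)) A = 1 := by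
  intro N
  induction N with
  | zero =>
    intro ι _ _ hcard A hA _
    haveI : IsEmpty ι := Fintype.card_eq_zero_iff.mp hcard
    rcases A.eq_empty_or_nonempty with h | ⟨a, ha⟩
    · left; simp [h]
    · right
      have hAuniv : A = Set.univ := by
        ext x
        simp only [Set.mem_univ, iff_true]
        have : x = a := Subsingleton.elim x a
        rw [this]; exact ha
      rw [hAuniv]
      exact measure_univ
  | succ N IH =>
    intro ι _ _ hcard A hA hyp
    have : Nonempty ι := Fintype.card_pos_iff.mp (by omega)
    obtain ⟨j₀⟩ := this
    set κ := {i : ι // ¬ i = j₀} with hκdef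
    have hcard' : Fintype.card κ = N := by
      have h1 : Fintype.card κ = Fintype.card ι - Fintype.card {i : ι // i = j₀} :=
        Fintype.card_subtype_compl _
    -- card {i // i = j₀} = 1
      have h2 : Fintype.card {i : ι // i = j₀} = 1 := Fintype.card_subtype_eq j₀
      omega
    set P : Measure (ι → β) := Measure.pi fun _ : ι => ν with hPdef
    set Pκ : Measure (κ → β) := Measure.pi fun _ : κ => ν with hPκdef
    set e := splitAt β j₀ with hedef
    set A' : Set (β × (κ → β)) := e.symm ⁻¹' A with hA'def
    have hA' : MeasurableSet A' := e.symm.measurable hA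
    set g : (κ → β) → ℝ≥0∞ := fun z => ν ((fun y => (y, z)) ⁻¹' A') with hgdef
    have hg : Measurable g := measurable_measure_prodMk_right hA'
    set B : Set (κ → β) := {z | g z = 1} with hBdef
    have hB : MeasurableSet B := hg (measurableSet_singleton 1)
    -- sections in direction j₀
    have hsetj₀ : ∀ (x : ι → β), {Y | Function.update x j₀ Y ∈ A}
        = (fun y => (y, fun i : κ => x i.1)) ⁻¹' A' := by
      intro x
      ext Y
      simp only [Set.mem_setOf_eq, Set.mem_preimage, hA'def]
      rw [update_eq_splitAt_symm]
    have hQ : ∀ᵐ z ∂Pκ, g z = 0 ∨ g z = 1 := by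
      have h1 := hyp j₀
      have h2 : ∀ᵐ x ∂P, g (fun i : κ => x i.1) = 0 ∨ g (fun i : κ => x i.1) = 1 := by
        filter_upwards [h1] with x hx
        rwa [hsetj₀ x] at hx
      have h3 : ∀ᵐ z ∂(Measure.map (fun x : ι → β => (fun i : κ => x i.1)) P),
          g z = 0 ∨ g z = 1 := by
        rw [MeasureTheory.ae_map_iff (mp_restr ν j₀).measurable.aemeasurable
          (zero_one_set_measurable hg)]
        exact h2
      rwa [(mp_restr ν j₀).map_eq] at h3
    -- Step A : P A = Pκ B
    have keyA : P A = Pκ B := by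
      have hswap : (Pκ.prod ν) (Prod.swap ⁻¹' A') = (ν.prod Pκ) A' :=
        Measure.measurePreserving_swap.measure_preimage hA'.nullMeasurableSet
      have hP : (ν.prod Pκ) A' = P A :=
        ((mp_splitAt ν j₀).symm).measure_preimage hA.nullMeasurableSet
      have hbase : (Pκ.prod ν) (Prod.swap ⁻¹' A') = Pκ B := by
        have := base_eq Pκ ν (Prod.swap ⁻¹' A') (measurable_swap hA') ?_
        · convert this using 2; rfl
        · filter_upwards [hQ] with z hz
          exact hz
      rw [← hP, ← hswap, hbase]
    -- Step B : sections of B in every direction are 0/1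
    have hypB : ∀ k : κ, ∀ᵐ z ∂Pκ,
        ν {Y | Function.update z k Y ∈ B} = 0 ∨ ν {Y | Function.update z k Y ∈ B} = 1 := by
      intro k
      -- part 1 : a.e. z, a.e. Y, g (update z k Y) ∈ {0,1}
      have hpart1 : ∀ᵐ z ∂Pκ, ∀ᵐ Y ∂ν,
          (g (Function.update z k Y) = 0 ∨ g (Function.update z k Y) = 1) := by
        have h1 : ∀ᵐ p ∂(Pκ.prod ν),
            (g (Function.update p.1 k p.2) = 0 ∨ g (Function.update p.1 k p.2) = 1) := by
          have h0 := hQ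
          rw [hPκdef] at h0
          rw [← (mp_update ν k).map_eq] at h0
          rwa [MeasureTheory.ae_map_iff (mp_update ν k).measurable.aemeasurable
            (zero_one_set_measurable hg)] at h0
        exact MeasureTheory.Measure.ae_ae_of_ae_prod h1
      -- part 2 : a.e. z, a.e. y, ν {Y | e.symm (y, update z k Y) ∈ A} ∈ {0,1}
      have hVmeas : MeasurableSet {p : (ι → β) × β | Function.update p.1 (k : ι) p.2 ∈ A} :=
        (mp_update ν (k : ι)).measurable hA
      have hsecmeas : Measurable fun x : ι → β => ν {Y | Function.update x (k : ι) Y ∈ A} :=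
        measurable_measure_prodMk_left hVmeas
      have hpart2 : ∀ᵐ z ∂Pκ, ∀ᵐ y ∂ν,
          (ν {Y | e.symm (y, Function.update z k Y) ∈ A} = 0 ∨
           ν {Y | e.symm (y, Function.update z k Y) ∈ A} = 1) := by
        have h1 := hyp (k : ι)
        rw [hPdef] at h1
        rw [← ((mp_splitAt ν j₀).symm).map_eq] at h1
        rw [MeasureTheory.ae_map_iff e.symm.measurable.aemeasurable
          (zero_one_set_measurable hsecmeas)] at h1
        -- h1 : ∀ᵐ q ∂(ν.prod Pκ), ν {Y | update (e.symm q) k Y ∈ A} ∈ {0,1}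
        have h2 : ∀ᵐ q ∂(ν.prod Pκ),
            (ν {Y | e.symm (q.1, Function.update q.2 k Y) ∈ A} = 0 ∨
             ν {Y | e.symm (q.1, Function.update q.2 k Y) ∈ A} = 1) := by
          filter_upwards [h1] with q hq
          have hseteq : {Y | Function.update (e.symm q) (k : ι) Y ∈ A}
              = {Y | e.symm (q.1, Function.update q.2 k Y) ∈ A} := by
            ext Y
            simp only [Set.mem_setOf_eq]
            rw [show (q : β × (κ → β)) = (q.1, q.2) from rfl, update_splitAt_symm]
          rwa [Set.mem_setOf_eq, hseteq] at hq
        have hWmeas : Measurable fun q : β × (κ → β) =>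
            ν {Y | e.symm (q.1, Function.update q.2 k Y) ∈ A} := by
          have hW : MeasurableSet {r : (β × (κ → β)) × β |
              e.symm (r.1.1, Function.update r.1.2 k r.2) ∈ A} := by
            have hm : Measurable fun r : (β × (κ → β)) × β =>
                e.symm (r.1.1, Function.update r.1.2 k r.2) := by
              apply e.symm.measurable.comp
              refine (measurable_fst.fst).prodMk ?_
              exact (mp_update ν k).measurable.comp
                ((measurable_fst.snd).prodMk measurable_snd)
            exact hm hA
          exact measurable_measure_prodMk_left hW
        have h3 : ∀ᵐ p ∂(Pκ.prod ν),
            (ν {Y | e.symm (p.2, Function.update p.1 k Y) ∈ A} = 0 ∨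
             ν {Y | e.symm (p.2, Function.update p.1 k Y) ∈ A} = 1) := by
          rw [← Measure.measurePreserving_swap.map_eq] at h2
          rwa [MeasureTheory.ae_map_iff measurable_swap.aemeasurable
            (zero_one_set_measurable hWmeas)] at h2
        exact MeasureTheory.Measure.ae_ae_of_ae_prod h3
      filter_upwards [hpart1.and hpart2] with z hz
      obtain ⟨hz1, hz2⟩ := hz
      set Cz : Set (β × β) := {p : β × β | e.symm (p.2, Function.update z k p.1) ∈ A}
        with hCzdef
      have hCz : MeasurableSet Cz := by
        have hm : Measurable fun p : β × β => e.symm (p.2, Function.update z k p.1) := by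
          apply e.symm.measurable.comp
          exact measurable_snd.prodMk ((measurable_update z).comp measurable_fst)
        exact hm hA
      have hv : ∀ᵐ Y ∂ν, ν (Prod.mk Y ⁻¹' Cz) = 0 ∨ ν (Prod.mk Y ⁻¹' Cz) = 1 := by
        filter_upwards [hz1] with Y hY
        exact hY
      have hh : ∀ᵐ y ∂ν, ν ((fun Y => (Y, y)) ⁻¹' Cz) = 0 ∨ ν ((fun Y => (Y, y)) ⁻¹' Cz) = 1 := by
        filter_upwards [hz2] with y hy
        exact hy
      have hbase2 : (ν.prod ν) Cz = ν {Y | Function.update z k Y ∈ B} := by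
        have := base_eq ν ν Cz hCz hv
        convert this using 2
        rfl
      have := two_dim ν ν Cz hCz hv hh
      rwa [hbase2] at this
    have hfin := IH κ hcard' B hB hypB
    rw [keyA]
    exact hfin

end PiLemma

theorem cross_fibering_planes (n m : ℕ) (hn : 1 ≤ n) (hm : 1 ≤ m)
    (A : Set (Fin m → Fin n → ℝ))
    (hAsub : A ⊆ {X | ∀ j i, X j i ∈ Set.Icc (0 : ℝ) 1})
    (hAmeas : MeasurableSet A)
    (hplanes : ∀ (j : Fin m) (x : Fin m → Fin n → ℝ),
      (∀ j' i, x j' i ∈ Set.Icc (0 : ℝ) 1) →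
      volume {Y : Fin n → ℝ | (∀ i, Y i ∈ Set.Icc (0 : ℝ) 1) ∧
          Function.update x j Y ∈ A} = 0 ∨
      volume {Y : Fin n → ℝ | (∀ i, Y i ∈ Set.Icc (0 : ℝ) 1) ∧
          Function.update x j Y ∈ A} = 1) :
    volume A = 0 ∨ volume A = 1 := by
  classical
  set cube : Set (Fin n → ℝ) := Set.pi Set.univ (fun _ => Set.Icc (0 : ℝ) 1) with hcube
  have hcubem : MeasurableSet cube := MeasurableSet.univ_pi fun _ => measurableSet_Icc
  have hvolcube : volume cube = 1 := by
    rw [hcube, volume_pi_pi]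
    simp [Real.volume_Icc]
  set ν : Measure (Fin n → ℝ) := volume.restrict cube with hν
  haveI : IsProbabilityMeasure ν := ⟨by rw [hν, Measure.restrict_apply_univ, hvolcube]⟩
  have hνcube : ν cube = 1 := by
    rw [hν, Measure.restrict_apply hcubem, Set.inter_self, hvolcube]
  have hbig : {X : Fin m → Fin n → ℝ | ∀ j i, X j i ∈ Set.Icc (0 : ℝ) 1}
      = Set.pi Set.univ (fun _ : Fin m => cube) := by
    ext X
    simp only [Set.mem_setOf_eq, hcube, Set.mem_univ_pi]
  have hPeq : (volume : Measure (Fin m → Fin n → ℝ)).restrict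
      (Set.pi Set.univ fun _ : Fin m => cube) = Measure.pi (fun _ : Fin m => ν) := by
    refine (Measure.pi_eq fun s hs => ?_).symm
    rw [Measure.restrict_apply (MeasurableSet.univ_pi hs), ← Set.pi_inter_distrib,
      volume_pi_pi]
    refine Finset.prod_congr rfl fun i _ => ?_
    rw [hν, Measure.restrict_apply (hs i)]
  have hPA : Measure.pi (fun _ : Fin m => ν) A = volume A := by
    rw [← hPeq, Measure.restrict_apply hAmeas,
      Set.inter_eq_self_of_subset_left (hbig ▸ hAsub)]
  have hyp : ∀ j : Fin m, ∀ᵐ x ∂(Measure.pi fun _ : Fin m => ν),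
      ν {Y | Function.update x j Y ∈ A} = 0 ∨ ν {Y | Function.update x j Y ∈ A} = 1 := by
    intro j
    have hae : ∀ᵐ x ∂(Measure.pi fun _ : Fin m => ν), ∀ j' i, x j' i ∈ Set.Icc (0 : ℝ) 1 := by
      have h2 : (Measure.pi fun _ : Fin m => ν) (Set.pi Set.univ fun _ : Fin m => cube) = 1 := by
        rw [Measure.pi_pi]
        simp [hνcube]
      have h1 : (Measure.pi fun _ : Fin m => ν) (Set.pi Set.univ fun _ : Fin m => cube)ᶜ = 0 :=
        (prob_compl_eq_zero_iff (MeasurableSet.univ_pi fun _ => hcubem)).mpr h2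
      have h3 : ∀ᵐ x ∂(Measure.pi fun _ : Fin m => ν),
          x ∈ Set.pi Set.univ (fun _ : Fin m => cube) := (MeasureTheory.mem_ae_iff).mpr h1
      filter_upwards [h3] with x hx
      rw [← hbig] at hx
      exact hx
    filter_upwards [hae] with x hx
    have hpl := hplanes j x hx
    have hseteq : {Y : Fin n → ℝ | (∀ i, Y i ∈ Set.Icc (0 : ℝ) 1) ∧ Function.update x j Y ∈ A}
        = {Y | Function.update x j Y ∈ A} ∩ cube := by
      ext Y
      simp only [Set.mem_setOf_eq, Set.mem_inter_iff, hcube, Set.mem_univ_pi]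
      exact and_comm
    have hν' : ν {Y | Function.update x j Y ∈ A}
        = volume ({Y | Function.update x j Y ∈ A} ∩ cube) :=
      Measure.restrict_apply (measurable_update x hAmeas)
    rw [hν', ← hseteq]
    exact hpl
  have hmain := pi_zero_one ν m (Fin m) (Fintype.card_fin m) A hAmeas hyp
  rwa [hPA] at hmain
end

section
/- Let n, m ≥ 1 and let Ψ_1, …, Ψ_m : ℤ^n \ {0} → [0,∞). Then M_{nm}(∪_{k∈ℕ} A_{n,m}(kΨ_1, …, kΨ_m)) = M_{nm}(∩_{k∈ℕ} A_{n,m}(Ψ_1/k, …, Ψ_m/k)). -/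
open MeasureTheory Metric Filter
open scoped ENNReal Topology

/-- The set `A_{n,m}(Ψ₁, …, Ψ_m)`: no coprimality condition. -/
def simulSetA (n m : ℕ) (Ψ : Fin m → (Fin n → ℤ) → ℝ) : Set (Fin m → Fin n → ℝ) :=
  {X | (∀ j i, X j i ∈ Set.Icc (0 : ℝ) 1) ∧
    {qp : (Fin n → ℤ) × (Fin m → ℤ) | qp.1 ≠ 0 ∧
      ∀ j, |(∑ i, (qp.1 i : ℝ) * X j i) + (qp.2 j : ℝ)| < Ψ j qp.1}.Infinite}

variable {n : ℕ}


def slabSet (n : ℕ) (q : Fin n → ℤ) (w : ℝ) : Set (Fin n → ℝ) :=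
  {z | ∃ p : ℤ, |(∑ i, (q i : ℝ) * z i) + (p : ℝ)| < w}

lemma isOpen_slabSet (q : Fin n → ℤ) (w : ℝ) : IsOpen (slabSet n q w) := by
  have : slabSet n q w = ⋃ p : ℤ, {z : Fin n → ℝ | |(∑ i, (q i : ℝ) * z i) + (p : ℝ)| < w} := by
    ext z; simp [slabSet]
  rw [this]
  refine isOpen_iUnion fun p => ?_
  have hc : Continuous fun z : Fin n → ℝ => |(∑ i, (q i : ℝ) * z i) + (p : ℝ)| := by fun_prop
  exact isOpen_lt hc continuous_const

lemma core_estimate (q : Fin n → ℤ) (w δ A : ℝ)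
    (hδ0 : 0 < δ) (hδw : δ ≤ w) (hδ2 : δ ≤ 1/2)
    (hA1 : 1 ≤ A) (hqA : ∀ i, |(q i : ℝ)| ≤ A) (i₀ : Fin n) (hi₀ : A ≤ |(q i₀ : ℝ)|)
    (x : Fin n → ℝ) (p : ℤ)
    (hx : |(∑ i, (q i : ℝ) * x i) + (p : ℝ)| ≤ min w (1/2)) :
    ∃ r : ℝ, 0 < r ∧ r ≤ 2*n/A ∧
      ENNReal.ofReal ((δ/(8*n^2*(min w (1/2))))^n) * volume (closedBall x r) ≤
        volume (slabSet n q δ ∩ closedBall x r) := by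
  have hnpos : 0 < n := i₀.pos
  have hn1 : (1:ℝ) ≤ n := by exact_mod_cast hnpos
  have hn0 : (0:ℝ) < n := by linarith
  have hnne : (n:ℝ) ≠ 0 := hn0.ne'
  set W : ℝ := min w (1/2) with hWdef
  have hW0 : 0 < W := lt_min (lt_of_lt_of_le hδ0 hδw) (by linarith)
  have hWne : W ≠ 0 := hW0.ne'
  have hδW : δ ≤ W := le_min hδw hδ2
  have hW2 : W ≤ 1/2 := min_le_right _ _
  have hA0 : 0 < A := lt_of_lt_of_le one_pos hA1
  have hAne : A ≠ 0 := hA0.ne'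
  set ρ : ℝ := δ/(2*n*A) with hρdef
  set r : ℝ := 4*n*W/A with hrdef
  have hρ0 : 0 < ρ := by positivity
  have hr0 : 0 < r := by positivity
  have hρr : ρ + W/A ≤ r := by
    have h1 : ρ ≤ W/A := by
      rw [hρdef]
      rw [div_le_div_iff₀ (by positivity) hA0]
      nlinarith [mul_nonneg (mul_nonneg hW0.le hA0.le) (sub_nonneg.2 hn1),
        mul_le_mul_of_nonneg_right hδW hA0.le]
    have h2 : W/A + W/A ≤ r := by
      rw [hrdef, ← add_div, div_le_div_iff₀ hA0 hA0]
      nlinarith [mul_nonneg (mul_nonneg hW0.le hA0.le) (sub_nonneg.2 hn1)]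
    linarith
  have hqi₀ : ((q i₀ : ℝ)) ≠ 0 := by
    intro h; rw [h] at hi₀; simp at hi₀; linarith
  refine ⟨r, hr0, ?_, ?_⟩
  · rw [hrdef, div_le_div_iff₀ hA0 hA0]
    nlinarith [mul_nonneg (mul_nonneg hn0.le hA0.le) (by linarith : (0:ℝ) ≤ 1 - 2*W)]
  set S : ℝ := (∑ i, (q i : ℝ) * x i) + (p : ℝ) with hSdef
  set x' : Fin n → ℝ := Function.update x i₀ (x i₀ - S / q i₀) with hx'def
  have hsum' : (∑ i, (q i : ℝ) * x' i) + (p : ℝ) = 0 := by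
    have h1 : ∀ i, (q i : ℝ) * x' i = (q i : ℝ) * x i - (if i = i₀ then S else 0) := by
      intro i
      by_cases h : i = i₀
      · rw [h, hx'def, Function.update_self]
        simp only [if_pos rfl, h]
        field_simp
        simp
      · rw [hx'def, Function.update_of_ne h, if_neg h]; ring
    rw [Finset.sum_congr rfl (fun i _ => h1 i), Finset.sum_sub_distrib]
    simp only [Finset.sum_ite_eq', Finset.mem_univ, if_true]
    rw [hSdef]; ring
  have hxx' : ∀ i, |x' i - x i| ≤ W/A := by
    intro i
    by_cases h : i = i₀
    · rw [h, hx'def, Function.update_self]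
      have h2 : x i₀ - S / q i₀ - x i₀ = -(S / q i₀) := by ring
      rw [h2, abs_neg, abs_div]
      exact div_le_div₀ (le_of_lt hW0) hx hA0 hi₀
    · rw [hx'def, Function.update_of_ne h]
      simp only [sub_self, abs_zero]
      positivity
  have hsub : closedBall x' ρ ⊆ slabSet n q δ ∩ closedBall x r := by
    intro z hz
    have hz' : ∀ i, |z i - x' i| ≤ ρ := by
      intro i
      have := (dist_pi_le_iff (le_of_lt hρ0)).1 (mem_closedBall.1 hz) i
      rwa [Real.dist_eq] at this
    constructor
    · refine ⟨p, ?_⟩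
      have key : (∑ i, (q i : ℝ) * z i) + (p:ℝ) = ∑ i, (q i : ℝ) * (z i - x' i) := by
        rw [Finset.sum_congr rfl (fun i _ => mul_sub ((q i : ℝ)) (z i) (x' i)),
          Finset.sum_sub_distrib]
        linarith [hsum']
      rw [key]
      calc |∑ i, (q i : ℝ) * (z i - x' i)| ≤ ∑ i, |(q i : ℝ) * (z i - x' i)| :=
            Finset.abs_sum_le_sum_abs _ _
        _ ≤ ∑ _i : Fin n, A * ρ := by
            refine Finset.sum_le_sum fun i _ => ?_
            rw [abs_mul]
            exact mul_le_mul (hqA i) (hz' i) (abs_nonneg _) (le_of_lt hA0)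
        _ = n * (A * ρ) := by rw [Finset.sum_const]; simp [mul_comm]
        _ = δ/2 := by rw [hρdef]; field_simp
        _ < δ := by linarith
    · rw [mem_closedBall]
      refine (dist_pi_le_iff (le_of_lt hr0)).2 fun i => ?_
      rw [Real.dist_eq]
      calc |z i - x i| ≤ |z i - x' i| + |x' i - x i| := abs_sub_le _ _ _
        _ ≤ ρ + W/A := add_le_add (hz' i) (hxx' i)
        _ ≤ r := hρr
  have hvol : ∀ (y : Fin n → ℝ) (s : ℝ), 0 < s →
      volume (closedBall y s) = ENNReal.ofReal ((2*s)^n) := by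
    intro y s hs
    rw [volume_pi_closedBall _ hs.le]
    simp only [Real.volume_closedBall, Finset.prod_const, Finset.card_univ, Fintype.card_fin]
    rw [← ENNReal.ofReal_pow (by positivity)]
  calc ENNReal.ofReal ((δ/(8*n^2*W))^n) * volume (closedBall x r)
      = ENNReal.ofReal ((δ/(8*n^2*W))^n * (2*r)^n) := by
        rw [hvol x r hr0, ← ENNReal.ofReal_mul (by positivity)]
    _ = volume (closedBall x' ρ) := by
        rw [hvol x' ρ hρ0, ← mul_pow]
        congr 2
        rw [hrdef, hρdef]
        field_simp
        ring
    _ ≤ volume (slabSet n q δ ∩ closedBall x r) := measure_mono hsub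

def manySlab (n : ℕ) (Q : Set (Fin n → ℤ)) (w : (Fin n → ℤ) → ℝ) : Set (Fin n → ℝ) :=
  {z | {q ∈ Q | z ∈ slabSet n q (w q)}.Infinite}

lemma measurableSet_manySlab (Q : Set (Fin n → ℤ)) (w : (Fin n → ℤ) → ℝ) :
    MeasurableSet (manySlab n Q w) := by
  have h : manySlab n Q w
      = ⋂ F : Finset (Fin n → ℤ), ⋃ q ∈ Q, ⋃ (_ : q ∉ F), slabSet n q (w q) := by
    ext z
    simp only [manySlab, Set.mem_setOf_eq, Set.mem_iInter, Set.mem_iUnion]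
    constructor
    · intro h F
      obtain ⟨q, hq, hnq⟩ := h.exists_notMem_finset F
      exact ⟨q, hq.1, hnq, hq.2⟩
    · intro h
      by_contra hfin
      rw [Set.not_infinite] at hfin
      obtain ⟨q, hq1, hq2, hq3⟩ := h hfin.toFinset
      exact hq2 (hfin.mem_toFinset.2 ⟨hq1, hq3⟩)
  rw [h]
  exact MeasurableSet.iInter fun F => MeasurableSet.biUnion (Q.to_countable)
    fun q _ => MeasurableSet.iUnion fun _ => (isOpen_slabSet q (w q)).measurableSet

lemma exists_big {Q : Set (Fin n → ℤ)} (h : Q.Infinite) (L : ℕ) :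
    ∃ q ∈ Q, ∃ i, (L : ℤ) < |q i| := by
  by_contra hc
  push_neg at hc
  apply h
  refine Set.Finite.subset (Set.Finite.pi (fun i : Fin n => Set.finite_Icc (-(L:ℤ)) L)) ?_
  intro q hq
  simp only [Set.mem_pi, Set.mem_univ, forall_true_left, Set.mem_Icc]
  intro i
  have h2 := hc q hq i
  rw [abs_le] at h2
  exact h2

lemma lemC (Q : Set (Fin n → ℤ)) (w : (Fin n → ℤ) → ℝ) (K : ℝ) (hK : 1 ≤ K) :
    volume (manySlab n Q w \ manySlab n Q (fun q => w q / K)) = 0 := by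
  have hK0 : 0 < K := lt_of_lt_of_le one_pos hK
  rcases Nat.eq_zero_or_pos n with hn0 | hnpos
  · subst hn0
    have h : manySlab 0 Q w = ∅ := by
      ext z
      simp only [manySlab, Set.mem_setOf_eq, Set.mem_empty_iff_false, iff_false]
      intro h
      exact h (Set.toFinite _)
    rw [h]
    simp
  have hn0 : (0:ℝ) < n := by exact_mod_cast hnpos
  by_cases hbad : {q ∈ Q | 1/2 < w q / K}.Infinite
  · have hall : manySlab n Q (fun q => w q / K) = Set.univ := by
      ext z
      simp only [Set.mem_univ, iff_true, manySlab, Set.mem_setOf_eq]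
      refine hbad.mono ?_
      rintro q ⟨hq1, hq2⟩
      refine ⟨hq1, ⟨-(round ((∑ i, (q i : ℝ) * z i))), ?_⟩⟩
      push_cast
      calc |(∑ i, (q i : ℝ) * z i) + -((round ((∑ i, (q i : ℝ) * z i)) : ℤ) : ℝ)|
          = |(∑ i, (q i : ℝ) * z i) - ((round ((∑ i, (q i : ℝ) * z i)) : ℤ) : ℝ)| := by
            ring_nf
        _ ≤ 1/2 := abs_sub_round _
        _ < w q / K := hq2
    rw [hall]
    simp
  rw [Set.not_infinite] at hbad
  set δf : (Fin n → ℤ) → ℝ := fun q => w q / K with hδf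
  set D : Set (Fin n → ℝ) := manySlab n Q w \ manySlab n Q δf with hD
  set Big : ℕ → (Fin n → ℤ) → Prop := fun N q => ∃ i, (N:ℤ) < |q i| with hBig
  set DN : ℕ → Set (Fin n → ℝ) := fun N =>
    D ∩ ⋂ (q : Fin n → ℤ) (_ : q ∈ Q) (_ : Big N q), (slabSet n q (δf q))ᶜ with hDN
  have hDsub : D ⊆ ⋃ N : ℕ, DN N := by
    intro z hz
    have hfin : {q ∈ Q | z ∈ slabSet n q (δf q)}.Finite := by
      by_contra hc
      exact hz.2 hc
    have hboundq : ∃ N : ℕ, ∀ q, q ∈ Q → z ∈ slabSet n q (δf q) → ∀ i, (q i).natAbs < N := by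
      refine ⟨1 + hfin.toFinset.sup (fun q => Finset.univ.sup fun i => (q i).natAbs), ?_⟩
      intro q hqQ hslab i
      have hqF : q ∈ hfin.toFinset := hfin.mem_toFinset.2 ⟨hqQ, hslab⟩
      have h0 : (q i).natAbs ≤ Finset.univ.sup fun i' => (q i').natAbs :=
        Finset.le_sup (f := fun i' => (q i').natAbs) (Finset.mem_univ i)
      have h1 : (Finset.univ.sup fun i' => (q i').natAbs) ≤
          hfin.toFinset.sup (fun q' => Finset.univ.sup fun i' => (q' i').natAbs) :=
        by exact Finset.le_sup (f := fun q' => Finset.univ.sup fun i' => (q' i').natAbs) hqF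
      rw [Nat.add_comm]
      exact Nat.lt_succ_of_le (le_trans h0 h1)
    obtain ⟨N, hN⟩ := hboundq
    refine Set.mem_iUnion.2 ⟨N, hz, ?_⟩
    refine Set.mem_iInter.2 fun q => Set.mem_iInter.2 fun hqQ => Set.mem_iInter.2 fun hbig => ?_
    intro hslab
    obtain ⟨i, hi⟩ := hbig
    have h2 := hN q hqQ hslab i
    have h3 : (N:ℤ) < ((q i).natAbs : ℤ) := by
      rw [← Int.abs_eq_natAbs]; exact hi
    omega
  refine measure_mono_null hDsub (measure_iUnion_null fun N => ?_)
  by_contra hpos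
  have hmeasD : MeasurableSet (DN N) := by
    refine ((measurableSet_manySlab Q w).diff (measurableSet_manySlab Q δf)).inter ?_
    exact MeasurableSet.iInter fun q => MeasurableSet.iInter fun _ =>
      MeasurableSet.iInter fun _ => (isOpen_slabSet _ _).measurableSet.compl
  have hne : volume.restrict (DN N) ≠ 0 := by
    intro h0
    exact hpos (by rwa [Measure.restrict_eq_zero] at h0)
  haveI := ae_neBot.2 hne
  obtain ⟨x, hxT, hxD⟩ :=
    ((Besicovitch.ae_tendsto_measure_inter_div volume (DN N)).and (ae_restrict_mem hmeasD)).exists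
  have hx1 : x ∈ manySlab n Q w := hxD.1.1
  have hx2 : ∀ q ∈ Q, Big N q → x ∉ slabSet n q (δf q) := by
    intro q hqQ hbig
    have := hxD.2
    rw [Set.mem_iInter] at this
    have := this q
    rw [Set.mem_iInter] at this
    have := this hqQ
    rw [Set.mem_iInter] at this
    exact this hbig
  have hQx : {q ∈ Q | x ∈ slabSet n q (w q) ∧ δf q ≤ 1/2}.Infinite := by
    have h1 : {q ∈ Q | x ∈ slabSet n q (w q)}.Infinite := hx1
    refine (h1.diff hbad).mono ?_
    rintro q ⟨⟨hq1, hq2⟩, hq3⟩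
    refine ⟨hq1, hq2, ?_⟩
    by_contra hgt
    exact hq3 ⟨hq1, by linarith [not_le.1 hgt]⟩
  set η : ℝ := (1/(8*n^2*K))^n with hη
  have hη0 : 0 < η := by positivity
  have key : ∀ M : ℕ, ∃ r : ℝ, 0 < r ∧ r ≤ 2*n/(M+1) ∧
      volume (DN N ∩ closedBall x r) + ENNReal.ofReal η * volume (closedBall x r) ≤
        volume (closedBall x r) := by
    intro M
    obtain ⟨q, hqmem, i₁, hi₁⟩ := exists_big hQx (max N M)
    obtain ⟨hqQ, hqslab, hqhalf⟩ := hqmem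
    obtain ⟨p₀, hp₀⟩ := hqslab
    have hw0 : 0 < w q := lt_of_le_of_lt (abs_nonneg _) hp₀
    set A : ℝ := ((Finset.univ.sup fun i => (q i).natAbs : ℕ) : ℝ) with hA
    have habs : ∀ i, |(q i : ℝ)| = (((q i).natAbs : ℕ) : ℝ) := by
      intro i
      rw [← Int.cast_abs]
      exact (Nat.cast_natAbs (q i)).symm
    have hqA : ∀ i, |(q i : ℝ)| ≤ A := by
      intro i
      rw [habs, hA]
      have := Finset.le_sup (f := fun i => (q i).natAbs) (Finset.mem_univ i)
      exact_mod_cast this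
    haveI : Nonempty (Fin n) := ⟨⟨0, hnpos⟩⟩
    obtain ⟨i₀, -, hi₀sup⟩ :=
      Finset.exists_mem_eq_sup Finset.univ Finset.univ_nonempty (fun i => (q i).natAbs)
    have hAi₀ : A ≤ |(q i₀ : ℝ)| := by
      rw [habs, hA, hi₀sup]
    have hMA : (M:ℝ)+1 ≤ A := by
      have h1 : ((N ⊔ M : ℕ) : ℤ) < ((q i₁).natAbs : ℤ) := by
        rw [← Int.abs_eq_natAbs]; exact hi₁
      have h1b : ((M:ℤ)) ≤ ((N ⊔ M : ℕ) : ℤ) := by exact_mod_cast le_max_right N M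
      have h3 : M < (q i₁).natAbs := by exact_mod_cast lt_of_le_of_lt h1b h1
      have h4 : (q i₁).natAbs ≤ Finset.univ.sup fun i => (q i).natAbs :=
        Finset.le_sup (f := fun i => (q i).natAbs) (Finset.mem_univ i₁)
      have h5 : M + 1 ≤ Finset.univ.sup fun i => (q i).natAbs :=
        Nat.succ_le_of_lt (lt_of_lt_of_le h3 h4)
      rw [hA]
      exact_mod_cast h5
    have hA1 : 1 ≤ A := by
      have : (0:ℝ) ≤ M := Nat.cast_nonneg M
      linarith
    have hBigN : Big N q := by
      refine ⟨i₁, lt_of_le_of_lt ?_ hi₁⟩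
      exact_mod_cast le_max_left N M
    obtain ⟨p, hp⟩ : ∃ p : ℤ, |(∑ i, (q i : ℝ) * x i) + (p:ℝ)| ≤ min (w q) (1/2) := by
      rcases le_or_gt (w q) (1/2) with hle | hlt
      · exact ⟨p₀, by rw [min_eq_left hle]; exact hp₀.le⟩
      · refine ⟨-(round (∑ i, (q i : ℝ) * x i)), ?_⟩
        rw [min_eq_right hlt.le]
        push_cast
        calc |(∑ i, (q i : ℝ) * x i) + -((round (∑ i, (q i : ℝ) * x i) : ℤ) : ℝ)|
            = |(∑ i, (q i : ℝ) * x i) - ((round (∑ i, (q i : ℝ) * x i) : ℤ) : ℝ)| := by ring_nf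
          _ ≤ 1/2 := abs_sub_round _
    have hδ0 : 0 < δf q := div_pos hw0 hK0
    have hδw : δf q ≤ w q := div_le_self hw0.le hK
    obtain ⟨r, hr0, hrA, hrest⟩ :=
      core_estimate q (w q) (δf q) A hδ0 hδw hqhalf hA1 hqA i₀ hAi₀ x p hp
    refine ⟨r, hr0, ?_, ?_⟩
    · calc r ≤ 2*n/A := hrA
        _ ≤ 2*n/((M:ℝ)+1) := by
            apply div_le_div_of_nonneg_left (by positivity) (by positivity) hMA
    · have hsl : MeasurableSet (slabSet n q (δf q) ∩ closedBall x r) :=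
        ((isOpen_slabSet _ _).measurableSet).inter measurableSet_closedBall
      have hsub2 : DN N ∩ closedBall x r ⊆
          closedBall x r \ (slabSet n q (δf q) ∩ closedBall x r) := by
        rintro z ⟨hz1, hz2⟩
        refine ⟨hz2, fun hz3 => ?_⟩
        have : z ∈ ⋂ (q' : Fin n → ℤ) (_ : q' ∈ Q) (_ : Big N q'), (slabSet n q' (δf q'))ᶜ := hz1.2
        rw [Set.mem_iInter] at this
        have := this q
        rw [Set.mem_iInter] at this
        have := this hqQ
        rw [Set.mem_iInter] at this
        exact this hBigN hz3.1
      have hημ : ENNReal.ofReal η * volume (closedBall x r) ≤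
          volume (slabSet n q (δf q) ∩ closedBall x r) := by
        refine le_trans (mul_le_mul_left ?_ _) hrest
        apply ENNReal.ofReal_le_ofReal
        rw [hη]
        apply pow_le_pow_left₀ (by positivity)
        rw [div_le_div_iff₀ (by positivity) (by positivity)]
        have hWw : min (w q) (1/2) ≤ w q := min_le_left _ _
        have hexp : δf q * (8*(n:ℝ)^2*K) = 8*(n:ℝ)^2 * w q := by
          rw [hδf]
          field_simp
        rw [hexp]
        nlinarith [mul_le_mul_of_nonneg_left hWw (by positivity : (0:ℝ) ≤ 8*(n:ℝ)^2)]
      calc volume (DN N ∩ closedBall x r) + ENNReal.ofReal η * volume (closedBall x r)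
          ≤ volume (closedBall x r \ (slabSet n q (δf q) ∩ closedBall x r)) +
              volume (slabSet n q (δf q) ∩ closedBall x r) :=
            add_le_add (measure_mono hsub2) hημ
        _ = volume (closedBall x r \ (slabSet n q (δf q) ∩ closedBall x r)) +
              volume (closedBall x r ∩ (slabSet n q (δf q) ∩ closedBall x r)) := by
            rw [Set.inter_eq_self_of_subset_right Set.inter_subset_right]
        _ = volume (closedBall x r) := by
            rw [add_comm]
            exact measure_inter_add_diff _ hsl
  choose rad hrad using key
  have h0 : Tendsto rad atTop (𝓝 0) := by
    apply squeeze_zero (fun M => (hrad M).1.le) (fun M => (hrad M).2.1)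
    have h1 : Tendsto (fun M : ℕ => ((M:ℝ)+1)) atTop atTop :=
      tendsto_atTop_add_const_right _ 1 tendsto_natCast_atTop_atTop
    exact Tendsto.div_atTop tendsto_const_nhds h1
  have htend : Tendsto rad atTop (𝓝[>] 0) :=
    tendsto_nhdsWithin_iff.2 ⟨h0, Filter.Eventually.of_forall fun M => (hrad M).1⟩
  have hlim := hxT.comp htend
  have hterm : ∀ M, volume (DN N ∩ closedBall x (rad M)) / volume (closedBall x (rad M)) ≤
      1 - ENNReal.ofReal η := by
    intro M
    have hb0 : volume (closedBall x (rad M)) ≠ 0 :=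
      (measure_closedBall_pos volume x (hrad M).1).ne'
    have hbt : volume (closedBall x (rad M)) ≠ ⊤ := measure_closedBall_lt_top.ne
    rw [ENNReal.div_le_iff hb0 hbt]
    have h2 := ENNReal.le_sub_of_add_le_right (by exact ENNReal.mul_ne_top ENNReal.ofReal_ne_top measure_closedBall_lt_top.ne) (hrad M).2.2
    rwa [ENNReal.sub_mul (fun _ _ => hbt), one_mul]
  have hfin1 : (1:ℝ≥0∞) ≤ 1 - ENNReal.ofReal η := le_of_tendsto' hlim hterm
  have hlt : 1 - ENNReal.ofReal η < 1 := by
    apply ENNReal.sub_lt_self ENNReal.one_ne_top one_ne_zero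
    simp only [ne_eq, ENNReal.ofReal_eq_zero, not_le]
    exact hη0
  exact absurd hfin1 (not_le.2 hlt)

lemma finite_fiber {m : ℕ} (c : Fin m → ℝ) (b : Fin m → ℝ) :
    {p : Fin m → ℤ | ∀ j, |c j + (p j : ℝ)| < b j}.Finite := by
  refine Set.Finite.subset
    (Set.Finite.pi (fun j : Fin m => Set.finite_Icc (-(⌈b j + |c j|⌉)) ⌈b j + |c j|⌉)) ?_
  intro p hp
  simp only [Set.mem_pi, Set.mem_univ, forall_true_left, Set.mem_Icc]
  intro j
  have h1 := hp j
  have h2 : |(p j : ℝ)| ≤ b j + |c j| := by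
    have h3 : |(p j:ℝ)| - |c j| ≤ |c j + (p j:ℝ)| := by
      have h4 := abs_sub_abs_le_abs_sub ((p j:ℝ)) (-(c j))
      simp only [abs_neg] at h4
      calc |(p j:ℝ)| - |c j| ≤ |(p j:ℝ) - -(c j)| := h4
        _ = |c j + (p j:ℝ)| := by ring_nf
    linarith
  have h4 : ((|p j| : ℤ) : ℝ) ≤ ((⌈b j + |c j|⌉ : ℤ) : ℝ) := by
    rw [Int.cast_abs]
    exact le_trans h2 (Int.le_ceil _)
  have h5 : |p j| ≤ ⌈b j + |c j|⌉ := by exact_mod_cast h4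
  rw [abs_le] at h5
  exact h5

lemma infinite_fst {α γ : Type*} {P : Set (α × γ)} (hP : P.Infinite)
    (hfib : ∀ q, {p | (q, p) ∈ P}.Finite) : (Prod.fst '' P).Infinite := by
  intro hfin
  apply hP
  have hsub : P ⊆ ⋃ q ∈ Prod.fst '' P, (fun p => (q, p)) '' {p | (q, p) ∈ P} := by
    rintro ⟨a, b⟩ hab
    exact Set.mem_biUnion ⟨(a,b), hab, rfl⟩ ⟨b, hab, rfl⟩
  exact Set.Finite.subset (Set.Finite.biUnion hfin fun q _ => (hfib q).image _) hsub

lemma measurableSet_simulSetA {m : ℕ} (Φ : Fin m → (Fin n → ℤ) → ℝ) :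
    MeasurableSet (simulSetA n m Φ) := by
  have h1 : MeasurableSet {X : Fin m → Fin n → ℝ | ∀ j i, X j i ∈ Set.Icc (0:ℝ) 1} := by
    have heq : {X : Fin m → Fin n → ℝ | ∀ j i, X j i ∈ Set.Icc (0:ℝ) 1}
        = ⋂ (j) (i), (fun X : Fin m → Fin n → ℝ => X j i) ⁻¹' (Set.Icc 0 1) := by
      ext X; simp
    rw [heq]
    exact MeasurableSet.iInter fun j => MeasurableSet.iInter fun i =>
      measurableSet_Icc.preimage ((measurable_pi_apply i).comp (measurable_pi_apply j))
  have hqp : ∀ qp : (Fin n → ℤ) × (Fin m → ℤ), MeasurableSet {X : Fin m → Fin n → ℝ |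
      qp.1 ≠ 0 ∧ ∀ j, |(∑ i, (qp.1 i:ℝ) * X j i) + (qp.2 j:ℝ)| < Φ j qp.1} := by
    intro qp
    by_cases h : qp.1 = 0
    · have heq : {X : Fin m → Fin n → ℝ |
          qp.1 ≠ 0 ∧ ∀ j, |(∑ i, (qp.1 i:ℝ) * X j i) + (qp.2 j:ℝ)| < Φ j qp.1} = ∅ := by
        ext X; simp [h]
      rw [heq]; exact MeasurableSet.empty
    · have heq : {X : Fin m → Fin n → ℝ |
          qp.1 ≠ 0 ∧ ∀ j, |(∑ i, (qp.1 i:ℝ) * X j i) + (qp.2 j:ℝ)| < Φ j qp.1}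
          = ⋂ j, {X : Fin m → Fin n → ℝ |
              |(∑ i, (qp.1 i:ℝ) * X j i) + (qp.2 j:ℝ)| < Φ j qp.1} := by
        ext X; simp [h]
      rw [heq]
      refine MeasurableSet.iInter fun j => ?_
      have hc : Continuous fun X : Fin m → Fin n → ℝ =>
          |(∑ i, (qp.1 i:ℝ) * X j i) + (qp.2 j:ℝ)| := by fun_prop
      exact (isOpen_lt hc continuous_const).measurableSet
  have h2 : MeasurableSet {X : Fin m → Fin n → ℝ |
      {qp : (Fin n → ℤ) × (Fin m → ℤ) | qp.1 ≠ 0 ∧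
        ∀ j, |(∑ i, (qp.1 i : ℝ) * X j i) + (qp.2 j : ℝ)| < Φ j qp.1}.Infinite} := by
    have heq : {X : Fin m → Fin n → ℝ |
        {qp : (Fin n → ℤ) × (Fin m → ℤ) | qp.1 ≠ 0 ∧
          ∀ j, |(∑ i, (qp.1 i : ℝ) * X j i) + (qp.2 j : ℝ)| < Φ j qp.1}.Infinite}
        = ⋂ F : Finset ((Fin n → ℤ) × (Fin m → ℤ)), ⋃ qp, ⋃ (_ : qp ∉ F),
            {X : Fin m → Fin n → ℝ | qp.1 ≠ 0 ∧
              ∀ j, |(∑ i, (qp.1 i:ℝ) * X j i) + (qp.2 j:ℝ)| < Φ j qp.1} := by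
      ext X
      simp only [Set.mem_setOf_eq, Set.mem_iInter, Set.mem_iUnion]
      constructor
      · intro h F
        obtain ⟨qp, hqp1, hqp2⟩ := h.exists_notMem_finset F
        exact ⟨qp, hqp2, hqp1⟩
      · intro h
        by_contra hfin
        rw [Set.not_infinite] at hfin
        obtain ⟨qp, hqp1, hqp2⟩ := h hfin.toFinset
        exact hqp1 (hfin.mem_toFinset.2 hqp2)
    rw [heq]
    exact MeasurableSet.iInter fun F => MeasurableSet.iUnion fun qp =>
      MeasurableSet.iUnion fun _ => hqp qp
  exact h1.inter h2

lemma slice_mem {m : ℕ} (Φ : Fin m → (Fin n → ℤ) → ℝ) (K : ℝ) (t : Fin m)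
    (Y : {j : Fin m // j ≠ t} → Fin n → ℝ)
    (X : Fin m → Fin n → ℝ) (z : Fin n → ℝ)
    (hXt : X t = z) (hXj : ∀ (j : Fin m) (h : j ≠ t), X j = Y ⟨j, h⟩)
    (hX : X ∈ simulSetA n m Φ)
    (hX' : X ∉ simulSetA n m (Function.update Φ t (fun q => Φ t q / K))) :
    z ∈ manySlab n {q | q ≠ 0 ∧ ∀ (j : Fin m) (h : j ≠ t), Y ⟨j, h⟩ ∈ slabSet n q (Φ j q)}
          (fun q => Φ t q) \
        manySlab n {q | q ≠ 0 ∧ ∀ (j : Fin m) (h : j ≠ t), Y ⟨j, h⟩ ∈ slabSet n q (Φ j q)}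
          (fun q => Φ t q / K) := by
  classical
  set Q : Set (Fin n → ℤ) :=
    {q | q ≠ 0 ∧ ∀ (j : Fin m) (h : j ≠ t), Y ⟨j, h⟩ ∈ slabSet n q (Φ j q)} with hQ
  set Φ' := Function.update Φ t (fun q => Φ t q / K) with hΦ'
  constructor
  · -- z ∈ manySlab Q (Φ t)
    have hP := hX.2
    have hfib : ∀ q : Fin n → ℤ, {p : Fin m → ℤ | (q, p) ∈
        {qp : (Fin n → ℤ) × (Fin m → ℤ) | qp.1 ≠ 0 ∧
          ∀ j, |(∑ i, (qp.1 i : ℝ) * X j i) + (qp.2 j : ℝ)| < Φ j qp.1}}.Finite := by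
      intro q
      refine Set.Finite.subset (finite_fiber (fun j => ∑ i, (q i : ℝ) * X j i)
        (fun j => Φ j q)) ?_
      intro p hp
      exact hp.2
    have himg := infinite_fst hP hfib
    refine himg.mono ?_
    rintro q ⟨⟨q', p⟩, hmem, rfl⟩
    refine ⟨⟨hmem.1, fun j h => ⟨p j, ?_⟩⟩, ⟨p t, ?_⟩⟩
    · rw [← hXj j h]; exact hmem.2 j
    · rw [← hXt]; exact hmem.2 t
  · -- z ∉ manySlab Q (Φ t / K)
    intro hinf
    apply hX'
    refine ⟨hX.1, ?_⟩
    set S := {q ∈ Q | z ∈ slabSet n q (Φ t q / K)} with hS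
    have hch : ∀ q ∈ S, ∃ p : Fin m → ℤ,
        ∀ j, |(∑ i, (q i : ℝ) * X j i) + (p j : ℝ)| < Φ' j q := by
      intro q hq
      have hex : ∀ j : Fin m, ∃ pj : ℤ,
          |(∑ i, (q i : ℝ) * X j i) + (pj : ℝ)| < Φ' j q := by
        intro j
        by_cases h : j = t
        · subst h
          obtain ⟨pj, hpj⟩ := hq.2
          refine ⟨pj, ?_⟩
          rw [hXt, hΦ', Function.update_self]
          exact hpj
        · obtain ⟨pj, hpj⟩ := hq.1.2 j h
          refine ⟨pj, ?_⟩
          rw [hXj j h, hΦ', Function.update_of_ne h]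
          exact hpj
      choose pf hpf using hex
      exact ⟨pf, hpf⟩
    choose! pfn hpfn using hch
    have hSinf : S.Infinite := hinf
    have himg2 : ((fun q => (q, pfn q)) '' S).Infinite :=
      Set.Infinite.image (fun a _ b _ h => congrArg Prod.fst h) hSinf
    refine himg2.mono ?_
    rintro ⟨q, p⟩ ⟨q', hq', heq⟩
    obtain ⟨rfl, rfl⟩ : q' = q ∧ pfn q' = p := by
      constructor
      · exact congrArg Prod.fst heq
      · exact congrArg Prod.snd heq
    exact ⟨hq'.1.1, hpfn q' hq'⟩

lemma step_lemma {m : ℕ} (Φ : Fin m → (Fin n → ℤ) → ℝ) (K : ℝ) (hK : 1 ≤ K) (t : Fin m) :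
    volume (simulSetA n m Φ \
      simulSetA n m (Function.update Φ t (fun q => Φ t q / K))) = 0 := by
  classical
  set Φ' := Function.update Φ t (fun q => Φ t q / K) with hΦ'
  set D := simulSetA n m Φ \ simulSetA n m Φ' with hDdef
  have hmeasD : MeasurableSet D :=
    (measurableSet_simulSetA Φ).diff (measurableSet_simulSetA Φ')
  set e := (MeasurableEquiv.piEquivPiSubtypeProd (fun _ : Fin m => (Fin n → ℝ))
    (fun j => j ≠ t)) with he
  have mp : MeasurePreserving e volume volume :=
    volume_preserving_piEquivPiSubtypeProd _ _
  have hDpre : volume ((e.symm) ⁻¹' D) = volume D :=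
    (mp.symm e).measure_preimage hmeasD.nullMeasurableSet
  rw [← hDpre]
  rw [MeasureTheory.Measure.volume_eq_prod,
    Measure.measure_prod_null (hmeasD.preimage e.symm.measurable)]
  refine Filter.Eventually.of_forall fun Y => ?_
  set Q : Set (Fin n → ℤ) :=
    {q | q ≠ 0 ∧ ∀ (j : Fin m) (h : j ≠ t), Y ⟨j, h⟩ ∈ slabSet n q (Φ j q)} with hQ
  set Z : Set (Fin n → ℝ) :=
    manySlab n Q (fun q => Φ t q) \ manySlab n Q (fun q => Φ t q / K) with hZ
  have hZnull : volume Z = 0 := lemC Q (fun q => Φ t q) K hK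
  have hsub : (Prod.mk Y ⁻¹' (e.symm ⁻¹' D)) ⊆
      Set.pi Set.univ (fun _ : {j : Fin m // ¬ j ≠ t} => Z) := by
    intro zb hzb
    intro idx _
    have hidx : idx = ⟨t, not_not.2 rfl⟩ := Subtype.ext (not_not.1 idx.2)
    have hXval : ∀ j : Fin m, (e.symm (Y, zb)) j
        = if h : j ≠ t then Y ⟨j, h⟩ else zb ⟨j, h⟩ := fun j => rfl
    have hXt : (e.symm (Y, zb)) t = zb idx := by
      rw [hXval t, dif_neg (not_not.2 rfl), hidx]
    have hXj : ∀ (j : Fin m) (h : j ≠ t), (e.symm (Y, zb)) j = Y ⟨j, h⟩ := by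
      intro j h
      rw [hXval j, dif_pos h]
    exact slice_mem Φ K t Y (e.symm (Y, zb)) (zb idx) hXt hXj hzb.1 hzb.2
  refine measure_mono_null hsub ?_
  haveI : Unique {j : Fin m // ¬ j ≠ t} :=
    ⟨⟨⟨t, not_not.2 rfl⟩⟩, fun a => Subtype.ext (not_not.1 a.2)⟩
  rw [volume_pi_pi]
  simp [hZnull]

lemma chain_lemma {m : ℕ} (Φ : Fin m → (Fin n → ℤ) → ℝ) (K : ℝ) (hK : 1 ≤ K) :
    volume ((simulSetA n m Φ : Set (Fin m → Fin n → ℝ)) \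
      simulSetA n m (fun j q => Φ j q / K)) = 0 := by
  classical
  set Φs : ℕ → (Fin m → (Fin n → ℤ) → ℝ) :=
    fun s j => if (j:ℕ) < s then (fun q => Φ j q / K) else Φ j with hΦs
  have hall : ∀ s, volume ((simulSetA n m Φ : Set (Fin m → Fin n → ℝ)) \
      simulSetA n m (Φs s)) = 0 := by
    intro s
    induction s with
    | zero =>
      have h0 : Φs 0 = Φ := by funext j; simp [hΦs]
      rw [h0, Set.diff_self]
      simp
    | succ s ih =>
      by_cases h : s < m
      · set t : Fin m := ⟨s, h⟩ with ht
        have hupd : Φs (s+1) = Function.update (Φs s) t (fun q => (Φs s) t q / K) := by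
          funext j
          by_cases hj : j = t
          · subst hj
            rw [Function.update_self]
            funext q
            simp only [hΦs]
            rw [if_pos (by omega : s < s + 1), if_neg (lt_irrefl s)]
          · rw [Function.update_of_ne hj]
            have hval : (j:ℕ) ≠ s := by
              intro hc
              exact hj (Fin.ext hc)
            by_cases hjs : (j:ℕ) < s
            · simp only [hΦs]
              rw [if_pos hjs, if_pos (by omega)]
            · simp only [hΦs]
              rw [if_neg hjs, if_neg (by omega)]
        have hsub : (simulSetA n m Φ : Set (Fin m → Fin n → ℝ)) \ simulSetA n m (Φs (s+1))
            ⊆ ((simulSetA n m Φ \ simulSetA n m (Φs s)) ∪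
                (simulSetA n m (Φs s) \ simulSetA n m (Φs (s+1)))) := by
          intro X hX
          by_cases hXs : X ∈ simulSetA n m (Φs s)
          · exact Or.inr ⟨hXs, hX.2⟩
          · exact Or.inl ⟨hX.1, hXs⟩
        refine measure_mono_null hsub (measure_union_null ih ?_)
        rw [hupd]
        exact step_lemma (Φs s) K hK t
      · have heq : Φs (s+1) = Φs s := by
          funext j
          have h1 : (j:ℕ) < s := lt_of_lt_of_le j.isLt (not_lt.1 h)
          simp only [hΦs]
          rw [if_pos h1, if_pos (by omega)]
        rw [heq]
        exact ih
  have hm : Φs m = fun j q => Φ j q / K := by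
    funext j
    simp only [hΦs]
    rw [if_pos j.isLt]
  rw [← hm]
  exact hall m

theorem simulA_union_eq_inter (n m : ℕ) (hn : 1 ≤ n) (hm : 1 ≤ m)
    (Ψ : Fin m → (Fin n → ℤ) → ℝ) (hΨ : ∀ j q, q ≠ 0 → 0 ≤ Ψ j q) :
    volume (⋃ k : ℕ+, simulSetA n m (fun j q => (k : ℝ) * Ψ j q)) =
      volume (⋂ k : ℕ+, simulSetA n m (fun j q => Ψ j q / (k : ℝ))) := by
  classical
  have hcast : ∀ k : ℕ+, (1:ℝ) ≤ (k : ℝ) := by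
    intro k
    exact_mod_cast k.one_le
  have hsub : (⋂ k : ℕ+, simulSetA n m (fun j q => Ψ j q / (k:ℝ))) ⊆
      (⋃ k : ℕ+, simulSetA n m (fun j q => (k:ℝ) * Ψ j q)) := by
    intro X hX
    have h1 := Set.mem_iInter.1 hX 1
    refine Set.mem_iUnion.2 ⟨1, ?_⟩
    have heq : (fun j (q : Fin n → ℤ) => ((1:ℕ+):ℝ) * Ψ j q)
        = fun j (q : Fin n → ℤ) => Ψ j q / ((1:ℕ+):ℝ) := by
      funext j q
      norm_num
    rw [heq]
    exact h1
  have hdiff : volume ((⋃ k : ℕ+, simulSetA n m (fun j q => (k:ℝ) * Ψ j q)) \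
      (⋂ k : ℕ+, simulSetA n m (fun j q => Ψ j q / (k:ℝ)))) = 0 := by
    have hsub2 : ((⋃ k : ℕ+, simulSetA n m (fun j q => (k:ℝ) * Ψ j q)) \
        (⋂ k : ℕ+, simulSetA n m (fun j q => Ψ j q / (k:ℝ)))) ⊆
        ⋃ (k : ℕ+) (k' : ℕ+), (simulSetA n m (fun j q => (k:ℝ) * Ψ j q) \
          simulSetA n m (fun j q => Ψ j q / (k':ℝ))) := by
      intro X hX
      obtain ⟨hX1, hX2⟩ := hX
      obtain ⟨k, hk⟩ := Set.mem_iUnion.1 hX1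
      have : ∃ k' : ℕ+, X ∉ simulSetA n m (fun j q => Ψ j q / (k':ℝ)) := by
        by_contra hc
        push_neg at hc
        exact hX2 (Set.mem_iInter.2 hc)
      obtain ⟨k', hk'⟩ := this
      exact Set.mem_iUnion.2 ⟨k, Set.mem_iUnion.2 ⟨k', hk, hk'⟩⟩
    refine measure_mono_null hsub2
      (measure_iUnion_null fun k => measure_iUnion_null fun k' => ?_)
    have hkne : ((k:ℝ)) ≠ 0 := by
      have := hcast k
      linarith
    have hK1 : (1:ℝ) ≤ (k:ℝ) * (k':ℝ) := by
      have h1 := hcast k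
      have h2 := hcast k'
      nlinarith
    have hchain := chain_lemma (fun j q => (k:ℝ) * Ψ j q) ((k:ℝ) * (k':ℝ)) hK1
    have heq : (fun j (q : Fin n → ℤ) => ((k:ℝ) * Ψ j q) / ((k:ℝ) * (k':ℝ)))
        = fun j (q : Fin n → ℤ) => Ψ j q / (k':ℝ) := by
      funext j q
      rw [mul_div_mul_left _ _ hkne]
    rw [heq] at hchain
    exact hchain
  apply le_antisymm
  · calc volume (⋃ k : ℕ+, simulSetA n m (fun j q => (k:ℝ) * Ψ j q))
        ≤ volume ((⋂ k : ℕ+, simulSetA n m (fun j q => Ψ j q / (k:ℝ))) ∪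
            ((⋃ k : ℕ+, simulSetA n m (fun j q => (k:ℝ) * Ψ j q)) \
              (⋂ k : ℕ+, simulSetA n m (fun j q => Ψ j q / (k:ℝ))))) := by
          apply measure_mono
          intro X hX
          by_cases h : X ∈ ⋂ k : ℕ+, simulSetA n m (fun j q => Ψ j q / (k:ℝ))
          · exact Or.inl h
          · exact Or.inr ⟨hX, h⟩
      _ ≤ volume (⋂ k : ℕ+, simulSetA n m (fun j q => Ψ j q / (k:ℝ))) +
            volume ((⋃ k : ℕ+, simulSetA n m (fun j q => (k:ℝ) * Ψ j q)) \
              (⋂ k : ℕ+, simulSetA n m (fun j q => Ψ j q / (k:ℝ)))) := measure_union_le _ _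
      _ = volume (⋂ k : ℕ+, simulSetA n m (fun j q => Ψ j q / (k:ℝ))) := by
          rw [hdiff, add_zero]
  · exact measure_mono hsub
end

section
/- Let n, m ≥ 1 and let Ψ : ℤ^n \ {0} → [0,∞). Then M_{nm}(A^×_{n,m}(Ψ) \ ∩_{k∈ℕ} A^×_{n,m}(Ψ/k)) = 0, i.e., the set of points of A^×_{n,m}(Ψ) not belonging to A^×_{n,m}(Ψ/k) for every positive integer k has nm-dimensional Lebesgue measure zero. -/
open MeasureTheory Metric
open scoped ENNReal

noncomputable section
/-- distance to nearest integer -/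
def nd (y : ℝ) : ℝ := |y - round y|


lemma nd_nonneg (y : ℝ) : 0 ≤ nd y := abs_nonneg _
lemma nd_le_half (y : ℝ) : nd y ≤ 1/2 := abs_sub_round y
lemma nd_le (y : ℝ) (p : ℤ) : nd y ≤ |y + p| := by
  rcases eq_or_ne (-p) (round y) with h | h
  · have h2 : |y + (p:ℝ)| = nd y := by rw [nd, ← h]; push_cast; ring_nf
    rw [h2]
  · have h1 : (1:ℝ) ≤ |(-p : ℝ) - round y| := by
      rw [show ((-p:ℝ) - round y) = ((-p - round y : ℤ) : ℝ) by push_cast; ring]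
      rw [← Int.cast_abs]
      exact_mod_cast Int.one_le_abs (sub_ne_zero.2 h)
    have h2 : |(-p:ℝ) - round y| ≤ |y + p| + |y - round y| := by
      calc |(-p:ℝ) - round y| = |(y - round y) - (y - (-p:ℝ))| := by congr 1; ring
        _ ≤ |y - round y| + |y - (-p:ℝ)| := abs_sub _ _
        _ = |y + p| + |y - round y| := by rw [sub_neg_eq_add, add_comm]
    have h3 := nd_le_half y
    unfold nd at *
    linarith
lemma nd_eq (y : ℝ) : |y + (-(round y) : ℤ)| = nd y := by
  unfold nd; congr 1; push_cast; ring
lemma nd_pos_of_ne {y : ℝ} (h : ∀ z : ℤ, y ≠ z) : 0 < nd y := by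
  rcases lt_or_eq_of_le (nd_nonneg y) with h1 | h1
  · exact h1
  · exfalso
    refine h (round y) ?_
    have h2 : |y - round y| = 0 := h1.symm
    have := abs_eq_zero.mp h2
    linarith

lemma vitaliNull {B : Set ℝ} (hB : B ⊆ Set.Icc (0:ℝ) 1) {η : ℝ} (hη : 0 < η) (hη1 : η < 1)
    (H : ∀ x ∈ B, ∀ ε > (0:ℝ), ∃ z r, 0 < r ∧ r ≤ ε ∧ x ∈ closedBall z r ∧
      ∀ y ∈ closedBall z (η * r), y ∉ B) :
    volume B = 0 := by
  have hVfin : volume B < ⊤ := by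
    calc volume B ≤ volume (Set.Icc (0:ℝ) 1) := measure_mono hB
    _ < ⊤ := by simp
  by_contra hV0
  -- it suffices to show volume B ≤ ofReal (1-η) * (volume B + ε') for all ε'
  have key : ∀ ε' : ℝ≥0∞, 0 < ε' → volume B ≤ ENNReal.ofReal (1-η) * (volume B + ε') := by
    intro ε' hε'
    obtain ⟨U, hUB, hUopen, hUlt⟩ := Set.exists_isOpen_lt_of_lt B (volume B + ε')
      (by exact ENNReal.lt_add_right hVfin.ne hε'.ne')
    -- the family
    set t : Set (ℝ × ℝ × ℝ) := {a | a.1 ∈ closedBall a.2.1 a.2.2 ∧ 0 < a.2.2 ∧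
      closedBall a.2.1 a.2.2 ⊆ U ∧ ∀ y ∈ closedBall a.2.1 (η * a.2.2), y ∉ B} with ht_def
    obtain ⟨u, hut, hucount, hudisj, hucov⟩ :=
      Vitali.exists_disjoint_covering_ae (volume : Measure ℝ) B t 6
        (fun a => 2 * a.2.2) (fun a => a.1) (fun a => closedBall a.2.1 a.2.2)
        (by rintro ⟨x, z, r⟩ ⟨hx, hr, -, -⟩
            exact closedBall_subset_closedBall' (by
              have := mem_closedBall.mp hx; rw [dist_comm] at this; simp only; linarith))
        (by rintro ⟨x, z, r⟩ ⟨hx, hr, -, -⟩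
            simp only [Real.volume_closedBall]
            rw [show (2:ℝ) * (3 * (2 * r)) = 6 * (2 * r) by ring, ENNReal.ofReal_mul (by norm_num)]
            exact mul_le_mul' (by norm_num) le_rfl)
        (by rintro ⟨x, z, r⟩ ⟨hx, hr, -, -⟩
            exact ⟨z, ball_subset_interior_closedBall (mem_ball_self hr)⟩)
        (by rintro ⟨x, z, r⟩ -; exact isClosed_closedBall)
        (by intro x hx ε hε
            obtain ⟨δ, hδ, hδU⟩ := Metric.isOpen_iff.mp hUopen x (hUB hx)
            obtain ⟨z, r, hr0, hrle, hxz, hdisj⟩ := H x hx (min (ε/2) (δ/3))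
              (by positivity)
            refine ⟨(x, z, r), ⟨hxz, hr0, ?_, hdisj⟩, ?_, rfl⟩
            · intro y hy
              apply hδU
              have h1 : r ≤ δ/3 := le_trans hrle (min_le_right _ _)
              have hdx := mem_closedBall.mp hxz
              have hdy := mem_closedBall.mp hy
              rw [mem_ball]
              calc dist y x ≤ dist y z + dist x z := dist_triangle_right y x z
                _ ≤ r + r := add_le_add hdy hdx
                _ < δ := by linarith
            · have h2 : r ≤ ε/2 := le_trans hrle (min_le_left _ _)
              simp only; linarith)
    -- now estimate
    have hmeas : ∀ a ∈ u, MeasurableSet (closedBall a.2.1 a.2.2) :=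
      fun a _ => measurableSet_closedBall
    have hsum : volume (⋃ a ∈ u, closedBall a.2.1 a.2.2) =
        ∑' a : u, volume (closedBall a.1.2.1 a.1.2.2) :=
      measure_biUnion hucount hudisj hmeas
    have hterm : ∀ a : u, volume (B ∩ closedBall a.1.2.1 a.1.2.2) ≤
        ENNReal.ofReal (1-η) * volume (closedBall a.1.2.1 a.1.2.2) := by
      rintro ⟨⟨x, z, r⟩, hau⟩
      obtain ⟨hx, hr0, hrU, hdisj⟩ := hut hau
      have hsub : B ∩ closedBall z r ⊆ closedBall z r \ closedBall z (η * r) := by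
        rintro y ⟨hyB, hyr⟩
        exact ⟨hyr, fun hy' => hdisj y hy' hyB⟩
      calc volume (B ∩ closedBall z r) ≤ volume (closedBall z r \ closedBall z (η * r)) :=
            measure_mono hsub
        _ = volume (closedBall z r) - volume (closedBall z (η * r)) := by
            apply measure_diff (closedBall_subset_closedBall (by nlinarith))
              measurableSet_closedBall.nullMeasurableSet (by simp [ENNReal.mul_eq_top])
        _ = ENNReal.ofReal (2 * r) - ENNReal.ofReal (2 * (η * r)) := by
            simp [Real.volume_closedBall]
        _ = ENNReal.ofReal (2 * r - 2 * (η * r)) := by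
            rw [ENNReal.ofReal_sub _ (by positivity)]
        _ = ENNReal.ofReal ((1 - η) * (2 * r)) := by ring_nf
        _ = ENNReal.ofReal (1-η) * ENNReal.ofReal (2 * r) := ENNReal.ofReal_mul (by linarith)
        _ = ENNReal.ofReal (1-η) * volume (closedBall z r) := by simp [Real.volume_closedBall]
    calc volume B ≤ volume (B \ ⋃ a ∈ u, closedBall a.2.1 a.2.2) +
          volume (B ∩ ⋃ a ∈ u, closedBall a.2.1 a.2.2) :=
            le_of_eq (measure_diff_add_inter _ (MeasurableSet.biUnion hucount hmeas)).symm
      _ = volume (B ∩ ⋃ a ∈ u, closedBall a.2.1 a.2.2) := by rw [hucov, zero_add]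
      _ ≤ volume (⋃ a ∈ u, B ∩ closedBall a.2.1 a.2.2) := by
          apply measure_mono; rw [Set.inter_iUnion₂]
      _ ≤ ∑' a : u, volume (B ∩ closedBall a.1.2.1 a.1.2.2) := measure_biUnion_le _ hucount _
      _ ≤ ∑' a : u, ENNReal.ofReal (1-η) * volume (closedBall a.1.2.1 a.1.2.2) :=
          ENNReal.tsum_le_tsum hterm
      _ = ENNReal.ofReal (1-η) * ∑' a : u, volume (closedBall a.1.2.1 a.1.2.2) :=
          ENNReal.tsum_mul_left
      _ = ENNReal.ofReal (1-η) * volume (⋃ a ∈ u, closedBall a.2.1 a.2.2) := by rw [hsum]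
      _ ≤ ENNReal.ofReal (1-η) * volume U :=
          mul_le_mul_right (measure_mono (Set.iUnion₂_subset fun a ha => (hut ha).2.2.1)) _
      _ ≤ ENNReal.ofReal (1-η) * (volume B + ε') := mul_le_mul_right hUlt.le _
  -- conclude
  have hc1 : ENNReal.ofReal (1-η) < 1 := by
    rw [show (1:ℝ≥0∞) = ENNReal.ofReal 1 by simp]
    exact ENNReal.ofReal_lt_ofReal_iff_of_nonneg (by linarith) |>.mpr (by linarith)
  have hle : volume B ≤ ENNReal.ofReal (1-η) * volume B := by
    apply ENNReal.le_of_forall_pos_le_add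
    intro ε hε hfin
    calc volume B ≤ ENNReal.ofReal (1-η) * (volume B + ε) := key ε (by exact_mod_cast hε)
      _ = ENNReal.ofReal (1-η) * volume B + ENNReal.ofReal (1-η) * ε := by ring
      _ ≤ ENNReal.ofReal (1-η) * volume B + 1 * ε :=
            add_le_add_right (mul_le_mul' hc1.le le_rfl) _
      _ = ENNReal.ofReal (1-η) * volume B + ε := by rw [one_mul]
  have : ENNReal.ofReal (1-η) * volume B < 1 * volume B := by
    have h := ENNReal.mul_lt_mul_right hV0 hVfin.ne hc1
    rwa [mul_comm (volume B), mul_comm (volume B)] at h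
  rw [one_mul] at this
  exact absurd (lt_of_le_of_lt hle this) (lt_irrefl _)

lemma sectionNull {δ : Type*} [Fintype δ] [DecidableEq δ] {π : δ → Type*}
    [∀ i, MeasurableSpace (π i)] (μ : ∀ i, Measure (π i)) [∀ i, SigmaFinite (μ i)]
    (x₀ : ∀ i, π i) (i₀ : δ) {S : Set (∀ i, π i)} (hS : MeasurableSet S)
    (h : ∀ f : ∀ i, π i, μ i₀ {x : π i₀ | Function.update f i₀ x ∈ S} = 0) :
    Measure.pi μ S = 0 := by
  have hf : Measurable (S.indicator (1 : (∀ i, π i) → ℝ≥0∞)) := measurable_one.indicator hS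
  have h1 : Measure.pi μ S = ∫⁻ x, S.indicator (1 : (∀ i, π i) → ℝ≥0∞) x ∂Measure.pi μ :=
    (lintegral_indicator_one hS).symm
  rw [h1, lintegral_eq_lmarginal_univ x₀,
    lmarginal_erase' _ hf (Finset.mem_univ i₀)]
  have hzero : (fun x => ∫⁻ xᵢ, S.indicator (1 : (∀ i, π i) → ℝ≥0∞) (Function.update x i₀ xᵢ)
      ∂μ i₀) = fun _ => 0 := by
    funext x
    have heq : ∀ xᵢ, S.indicator (1 : (∀ i, π i) → ℝ≥0∞) (Function.update x i₀ xᵢ)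
        = ((Function.update x i₀) ⁻¹' S).indicator (1 : π i₀ → ℝ≥0∞) xᵢ := by
      intro xᵢ
      by_cases hx : Function.update x i₀ xᵢ ∈ S <;> simp [Set.indicator, hx]
    simp_rw [heq]
    rw [lintegral_indicator_one ((measurable_update x) hS)]
    exact h x
  rw [hzero]
  simp [lmarginal]


section MultAux

variable (n m : ℕ)

/-- dot product of integer vector with row `j` -/
def mdot (q : Fin n → ℤ) (X : Fin m → Fin n → ℝ) (j : Fin m) : ℝ := ∑ i, (q i : ℝ) * X j i

/-- solvability set -/
def msol (q : Fin n → ℤ) (c : ℝ) : Set (Fin m → Fin n → ℝ) :=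
  {X | ∃ p : Fin m → ℤ, ∏ j, |mdot n m q X j + p j| < c}

def mbox : Set (Fin m → Fin n → ℝ) := {X | ∀ j i, X j i ∈ Set.Icc (0:ℝ) 1}

def mNN : Set (Fin m → Fin n → ℝ) :=
  ⋃ (q : Fin n → ℤ) (_ : q ≠ 0) (j : Fin m) (z : ℤ), {X | mdot n m q X j = z}

def mgood (i₀ : Fin n) (M : ℕ) : Set (Fin n → ℤ) :=
  {q | (∀ i, |q i| ≤ |q i₀|) ∧ (M:ℤ) ≤ |q i₀|}

def mbig (N : ℕ) : Set (Fin n → ℤ) := {q | ∃ i, (N:ℤ) ≤ |q i|}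

def mBad (Ψ : (Fin n → ℤ) → ℝ) (k N : ℕ) (i₀ : Fin n) : Set (Fin m → Fin n → ℝ) :=
  mbox n m ∩ (mNN n m)ᶜ ∩ (⋂ M : ℕ, ⋃ q ∈ mgood n i₀ M, msol n m q (Ψ q)) ∩
    (⋂ q ∈ mbig n N, (msol n m q (Ψ q / k))ᶜ)

lemma measurable_mdot (q : Fin n → ℤ) (j : Fin m) :
    Measurable (fun X : Fin m → Fin n → ℝ => mdot n m q X j) := by
  apply Finset.measurable_sum
  intro i _
  exact measurable_const.mul ((measurable_pi_apply i).comp (measurable_pi_apply j))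

lemma measurableSet_msol (q : Fin n → ℤ) (c : ℝ) : MeasurableSet (msol n m q c) := by
  unfold msol
  have : {X : Fin m → Fin n → ℝ | ∃ p : Fin m → ℤ, ∏ j, |mdot n m q X j + p j| < c}
      = ⋃ p : Fin m → ℤ, {X | ∏ j, |mdot n m q X j + p j| < c} := by
    ext X; simp
  rw [this]
  refine MeasurableSet.iUnion fun p => ?_
  refine measurableSet_lt ?_ measurable_const
  apply Finset.measurable_prod
  intro j _
  exact ((measurable_mdot n m q j).add_const _).abs

lemma measurableSet_mbox : MeasurableSet (mbox n m) := by
  have : mbox n m = ⋂ (j) (i), {X : Fin m → Fin n → ℝ | X j i ∈ Set.Icc (0:ℝ) 1} := by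
    ext X; simp [mbox]
  rw [this]
  exact MeasurableSet.iInter fun j => MeasurableSet.iInter fun i =>
    ((measurable_pi_apply i).comp (measurable_pi_apply j)) measurableSet_Icc

lemma measurableSet_mNN : MeasurableSet (mNN n m) := by
  unfold mNN
  refine MeasurableSet.iUnion fun q => MeasurableSet.iUnion fun _ =>
    MeasurableSet.iUnion fun j => MeasurableSet.iUnion fun z => ?_
  exact (measurable_mdot n m q j) (measurableSet_singleton (z:ℝ))

lemma measurableSet_mBad (Ψ : (Fin n → ℤ) → ℝ) (k N : ℕ) (i₀ : Fin n) :
    MeasurableSet (mBad n m Ψ k N i₀) := by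
  refine MeasurableSet.inter (MeasurableSet.inter (MeasurableSet.inter
    (measurableSet_mbox n m) (measurableSet_mNN n m).compl) ?_) ?_
  · exact MeasurableSet.iInter fun M => MeasurableSet.biUnion (Set.to_countable _)
      (fun q _ => measurableSet_msol n m q (Ψ q))
  · exact MeasurableSet.biInter (Set.to_countable _)
      (fun q _ => (measurableSet_msol n m q (Ψ q / k)).compl)

end MultAux
lemma mBad_fiber_null (n m : ℕ) (hm : 0 < m) (Ψ : (Fin n → ℤ) → ℝ)
    (k N : ℕ) (hk : 1 ≤ k) (i₀ : Fin n) (F : Fin m → Fin n → ℝ) (g : Fin n → ℝ) :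
    volume {x : ℝ | Function.update F ⟨0, hm⟩ (Function.update g i₀ x)
      ∈ mBad n m Ψ k N i₀} = 0 := by
  set j₀ : Fin m := ⟨0, hm⟩ with hj₀
  set X : ℝ → (Fin m → Fin n → ℝ) :=
    fun x => Function.update F j₀ (Function.update g i₀ x) with hXdef
  set B := {x : ℝ | X x ∈ mBad n m Ψ k N i₀} with hBdef
  show volume B = 0
  have hk0 : (0:ℝ) < k := by exact_mod_cast hk
  have hk1 : (1:ℝ) ≤ k := by exact_mod_cast hk
  have hXj₀ : ∀ x, X x j₀ i₀ = x := by intro x; simp [hXdef]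
  have hXj : ∀ (x : ℝ) (j : Fin m), j ≠ j₀ → X x j = F j :=
    fun x j hj => Function.update_of_ne hj _ _
  have hBsub : B ⊆ Set.Icc (0:ℝ) 1 := by
    intro x hx
    have hbox := hx.1.1.1
    have := hbox j₀ i₀
    rwa [hXj₀ x] at this
  have hη : (0:ℝ) < 1/(2*k) := by positivity
  have hη1 : 1/(2*(k:ℝ)) < 1 := by
    rw [div_lt_one (by positivity)]; linarith
  refine vitaliNull hBsub hη hη1 ?_
  intro x hx ε hε
  obtain ⟨⟨⟨hbox, hNN⟩, hsols⟩, hexcl⟩ := hx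
  simp only [mNN, Set.mem_compl_iff, Set.mem_iUnion, Set.mem_setOf_eq, not_exists] at hNN
  set M : ℕ := max (N + 1) (⌈(k:ℝ)/ε⌉₊ + 1) with hM
  have hMN : N + 1 ≤ M := le_max_left _ _
  have hMceil : ⌈(k:ℝ)/ε⌉₊ + 1 ≤ M := le_max_right _ _
  clear_value M
  obtain ⟨q, hqgood, hqsol⟩ : ∃ q ∈ mgood n i₀ M, X x ∈ msol n m q (Ψ q) := by
    have := Set.mem_iInter.mp hsols M
    simpa using this
  obtain ⟨hqmax, hqM⟩ := hqgood
  have hM1 : 1 ≤ M := le_trans (Nat.le_add_left 1 N) hMN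
  have hq0 : q ≠ 0 := by
    intro h0
    rw [h0] at hqM
    simp at hqM
    omega
  set a : ℤ := q i₀ with ha
  set γ : ℝ := ∑ i ∈ Finset.univ.erase i₀, (q i : ℝ) * g i with hγ
  have hdot0 : ∀ y : ℝ, mdot n m q (X y) j₀ = (a:ℝ) * y + γ := by
    intro y
    unfold mdot
    have h1 : X y j₀ = Function.update g i₀ y := by simp [hXdef]
    rw [h1, ← Finset.add_sum_erase _ _ (Finset.mem_univ i₀)]
    congr 1
    · rw [Function.update_self]
    · apply Finset.sum_congr rfl
      intro i hi
      rw [Function.update_of_ne (Finset.ne_of_mem_erase hi)]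
  have hdotj : ∀ (y : ℝ) (j : Fin m), j ≠ j₀ → mdot n m q (X y) j = ∑ i, (q i : ℝ) * F j i := by
    intro y j hj; unfold mdot; rw [hXj y j hj]
  set C : ℝ := ∏ j ∈ Finset.univ.erase j₀, nd (∑ i, (q i : ℝ) * F j i) with hC
  have hprod : ∀ y : ℝ, ∏ j, nd (mdot n m q (X y) j) = nd ((a:ℝ) * y + γ) * C := by
    intro y
    rw [← Finset.mul_prod_erase _ _ (Finset.mem_univ j₀), hdot0 y]
    congr 1
    apply Finset.prod_congr rfl
    intro j hj
    rw [hdotj y j (Finset.ne_of_mem_erase hj)]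
  have hCpos : 0 < C := by
    apply Finset.prod_pos
    intro j hj
    rw [← hdotj x j (Finset.ne_of_mem_erase hj)]
    apply nd_pos_of_ne
    intro z hz
    exact hNN q hq0 j z hz
  obtain ⟨p, hp⟩ := hqsol
  have key1 : nd ((a:ℝ) * x + γ) * C < Ψ q := by
    rw [← hprod x]
    calc ∏ j, nd (mdot n m q (X x) j) ≤ ∏ j, |mdot n m q (X x) j + p j| := by
          apply Finset.prod_le_prod
          · intro j _; exact nd_nonneg _
          · intro j _; exact nd_le _ _
      _ < Ψ q := hp
  have hqbig : q ∈ mbig n N := by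
    refine ⟨i₀, ?_⟩
    show (N:ℤ) ≤ |a|
    have h2 : (N:ℤ) + 1 ≤ (M:ℤ) := by exact_mod_cast hMN
    exact le_trans (by omega) hqM
  have hexq : X x ∉ msol n m q (Ψ q / k) := by
    have h1 := Set.mem_iInter.mp hexcl q
    exact Set.mem_iInter.mp h1 hqbig
  have key2 : Ψ q / k ≤ nd ((a:ℝ) * x + γ) * C := by
    by_contra hcon
    push_neg at hcon
    apply hexq
    refine ⟨fun j => -round (mdot n m q (X x) j), ?_⟩
    have heq : ∏ j, |mdot n m q (X x) j + ((-round (mdot n m q (X x) j) : ℤ) : ℝ)|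
        = ∏ j, nd (mdot n m q (X x) j) := by
      apply Finset.prod_congr rfl
      intro j _
      exact nd_eq _
    rw [heq, hprod x]
    exact hcon
  set D : ℝ := nd ((a:ℝ) * x + γ) with hD
  set φ : ℝ := Ψ q / C with hφ
  have hDφ : D < φ := (lt_div_iff₀ hCpos).mpr key1
  have key2' : Ψ q ≤ D * C * k := by
    rw [div_le_iff₀ hk0] at key2; linarith
  have hφk : φ / k ≤ D := by
    rw [hφ, div_div, div_le_iff₀ (by positivity)]
    nlinarith
  have hφpos : 0 < φ := lt_of_le_of_lt (nd_nonneg _) hDφ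
  have hΨpos : 0 < Ψ q := by
    have h1 : Ψ q = φ * C := by rw [hφ]; field_simp
    rw [h1]; positivity
  have hφhalf : φ ≤ (k:ℝ) * (1/2) := by
    have h1 : φ ≤ k * D := by
      rw [div_le_iff₀ hk0] at hφk
      linarith
    calc φ ≤ (k:ℝ) * D := h1
      _ ≤ (k:ℝ) * (1/2) := mul_le_mul_of_nonneg_left (nd_le_half _) (le_of_lt hk0)
  have ha1 : (1:ℤ) ≤ |a| := by
    have h2 : (1:ℤ) ≤ (M:ℤ) := by exact_mod_cast hM1
    exact le_trans h2 hqM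
  have ha0 : (a:ℝ) ≠ 0 := by
    intro h
    rw [Int.cast_eq_zero] at h
    rw [h] at ha1
    simp at ha1
  set A : ℝ := |(a:ℝ)| with hA
  have hApos : 0 < A := abs_pos.mpr ha0
  have hAM : (M:ℝ) ≤ A := by
    rw [hA, ← Int.cast_abs]
    exact_mod_cast hqM
  set r : ℝ := φ / A with hr
  set z : ℝ := ((round ((a:ℝ) * x + γ) : ℝ) - γ) / a with hz
  have hrpos : 0 < r := div_pos hφpos hApos
  have hrε : r ≤ ε := by
    have hceil : (k:ℝ)/ε ≤ ((⌈(k:ℝ)/ε⌉₊ + 1 : ℕ) : ℝ) := by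
      push_cast
      linarith [Nat.le_ceil ((k:ℝ)/ε)]
    have hMk : (k:ℝ)/ε ≤ (M:ℝ) := le_trans hceil (by exact_mod_cast hMceil)
    have hkA : (k:ℝ)/ε ≤ A := le_trans hMk hAM
    have h2 : φ ≤ ε * A := by
      calc φ ≤ (k:ℝ) * (1/2) := hφhalf
        _ ≤ (k:ℝ) := by linarith
        _ = ε * ((k:ℝ)/ε) := by field_simp
        _ ≤ ε * A := mul_le_mul_of_nonneg_left hkA (le_of_lt hε)
    rw [hr, div_le_iff₀ hApos]
    linarith
  have hDe : |((a:ℝ) * x + γ) - (round ((a:ℝ) * x + γ) : ℝ)| = D := rfl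
  have hxz : x ∈ closedBall z r := by
    rw [mem_closedBall, Real.dist_eq]
    have hxz2 : x - z = (((a:ℝ) * x + γ) - (round ((a:ℝ) * x + γ) : ℝ)) / a := by
      rw [hz]; field_simp; ring
    rw [hxz2, abs_div, hDe]
    exact (div_le_div_iff_of_pos_right hApos).mpr hDφ.le
  refine ⟨z, r, hrpos, hrε, hxz, ?_⟩
  intro y hy hyB
  have hyd : |y - z| ≤ (1/(2*(k:ℝ))) * r := by rwa [mem_closedBall, Real.dist_eq] at hy
  have hnd_y : nd ((a:ℝ) * y + γ) ≤ φ / (2*k) := by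
    calc nd ((a:ℝ) * y + γ) ≤ |(a:ℝ) * y + γ + ((-(round ((a:ℝ)*x+γ)) : ℤ) : ℝ)| := nd_le _ _
      _ = A * |y - z| := by
          rw [hA, ← abs_mul]
          congr 1
          push_cast
          rw [hz]; field_simp; ring
      _ ≤ A * ((1/(2*(k:ℝ))) * r) := mul_le_mul_of_nonneg_left hyd (le_of_lt hApos)
      _ = φ / (2*k) := by rw [hr]; field_simp
  have hexq_y : X y ∉ msol n m q (Ψ q / k) := by
    have h1 := Set.mem_iInter.mp hyB.2 q
    exact Set.mem_iInter.mp h1 hqbig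
  apply hexq_y
  refine ⟨fun j => -round (mdot n m q (X y) j), ?_⟩
  have heq : ∏ j, |mdot n m q (X y) j + ((-round (mdot n m q (X y) j) : ℤ) : ℝ)|
      = ∏ j, nd (mdot n m q (X y) j) := by
    apply Finset.prod_congr rfl
    intro j _
    exact nd_eq _
  rw [heq, hprod y]
  calc nd ((a:ℝ) * y + γ) * C ≤ (φ/(2*(k:ℝ))) * C :=
        mul_le_mul_of_nonneg_right hnd_y hCpos.le
    _ = Ψ q / (2*(k:ℝ)) := by rw [hφ]; field_simp
    _ < Ψ q / k := by
        apply div_lt_div_of_pos_left hΨpos hk0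
        linarith
lemma mBad_null (n m : ℕ) (hm : 0 < m) (Ψ : (Fin n → ℤ) → ℝ)
    (k N : ℕ) (hk : 1 ≤ k) (i₀ : Fin n) :
    volume (mBad n m Ψ k N i₀) = 0 := by
  rw [volume_pi]
  refine sectionNull (fun _ => (volume : Measure (Fin n → ℝ))) (fun _ _ => 0) ⟨0, hm⟩
    (measurableSet_mBad n m Ψ k N i₀) ?_
  intro F
  rw [volume_pi]
  refine sectionNull (fun _ => (volume : Measure ℝ)) (fun _ => 0) i₀
    ((measurable_update F) (measurableSet_mBad n m Ψ k N i₀)) ?_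
  intro g
  exact mBad_fiber_null n m hm Ψ k N hk i₀ F g

lemma mNN_single_null (n m : ℕ) (q : Fin n → ℤ) (hq : q ≠ 0) (j : Fin m) (z : ℤ) :
    volume {X : Fin m → Fin n → ℝ | mdot n m q X j = z} = 0 := by
  obtain ⟨i₁, hi₁⟩ : ∃ i, q i ≠ 0 := by
    by_contra hcon; push_neg at hcon; exact hq (funext hcon)
  have hSmeas : MeasurableSet {X : Fin m → Fin n → ℝ | mdot n m q X j = z} :=
    (measurable_mdot n m q j) (measurableSet_singleton (z:ℝ))
  rw [volume_pi]
  refine sectionNull (fun _ => (volume : Measure (Fin n → ℝ))) (fun _ _ => 0) j hSmeas ?_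
  intro F
  rw [volume_pi]
  refine sectionNull (fun _ => (volume : Measure ℝ)) (fun _ => 0) i₁
    ((measurable_update F) hSmeas) ?_
  intro g
  set γ : ℝ := ∑ i ∈ Finset.univ.erase i₁, (q i : ℝ) * g i with hγ
  refine measure_mono_null (?_ : _ ⊆ ({((z:ℝ) - γ)/(q i₁)} : Set ℝ)) (measure_singleton _)
  intro x hx
  have hd : mdot n m q (Function.update F j (Function.update g i₁ x)) j
      = (q i₁:ℝ) * x + γ := by
    unfold mdot
    rw [Function.update_self, ← Finset.add_sum_erase _ _ (Finset.mem_univ i₁)]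
    congr 1
    · rw [Function.update_self]
    · apply Finset.sum_congr rfl
      intro i hi
      rw [Function.update_of_ne (Finset.ne_of_mem_erase hi)]
  have hx2 : (q i₁:ℝ) * x + γ = z := by
    have : mdot n m q (Function.update F j (Function.update g i₁ x)) j = z := hx
    rwa [hd] at this
  have hq1 : (q i₁ : ℝ) ≠ 0 := Int.cast_ne_zero.mpr hi₁
  rw [Set.mem_singleton_iff]
  field_simp
  linarith

lemma mNN_null (n m : ℕ) : volume (mNN n m) = 0 := by
  unfold mNN
  refine measure_iUnion_null fun q => measure_iUnion_null fun hq =>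
    measure_iUnion_null fun j => measure_iUnion_null fun z => ?_
  exact mNN_single_null n m q hq j z
end

/-- The set `A^×_{n,m}(Ψ)`: multiplicative approximation with no coprimality condition. -/
def multSetA (n m : ℕ) (Ψ : (Fin n → ℤ) → ℝ) : Set (Fin m → Fin n → ℝ) :=
  {X | (∀ j i, X j i ∈ Set.Icc (0 : ℝ) 1) ∧
    {qp : (Fin n → ℤ) × (Fin m → ℤ) | qp.1 ≠ 0 ∧
      (∏ j, |(∑ i, (qp.1 i : ℝ) * X j i) + (qp.2 j : ℝ)|) < Ψ qp.1}.Infinite}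

lemma mreduction (n m : ℕ) (hn : 0 < n) (hm : 0 < m) (Ψ : (Fin n → ℤ) → ℝ) :
    multSetA n m Ψ \ ⋂ k : ℕ+, multSetA n m (fun q => Ψ q / (k : ℝ)) ⊆
      mNN n m ∪ ⋃ (k : ℕ+) (N : ℕ) (i₀ : Fin n), mBad n m Ψ (k:ℕ) N i₀ := by
  intro X hX
  by_cases hNN : X ∈ mNN n m
  · exact Or.inl hNN
  refine Or.inr ?_
  obtain ⟨⟨hbox, hinf⟩, hni⟩ := hX
  rw [Set.mem_iInter] at hni
  push_neg at hni
  obtain ⟨k, hk⟩ := hni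
  -- nd positivity at X
  have hnd : ∀ (q : Fin n → ℤ), q ≠ 0 → ∀ j, 0 < nd (mdot n m q X j) := by
    intro q hq j
    apply nd_pos_of_ne
    intro z hz
    exact hNN (Set.mem_iUnion.mpr ⟨q, Set.mem_iUnion.mpr ⟨hq, Set.mem_iUnion.mpr ⟨j,
      Set.mem_iUnion.mpr ⟨z, hz⟩⟩⟩⟩)
  -- finite fibers
  have hfib : ∀ q : Fin n → ℤ, q ≠ 0 → ∀ c : ℝ,
      {p : Fin m → ℤ | ∏ j, |mdot n m q X j + (p j : ℝ)| < c}.Finite := by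
    intro q hq c
    set Cj : Fin m → ℝ := fun j => ∏ j' ∈ Finset.univ.erase j, nd (mdot n m q X j') with hCj
    have hCjpos : ∀ j, 0 < Cj j := fun j => Finset.prod_pos fun j' _ => hnd q hq j'
    set Bd : Fin m → ℤ := fun j => ⌈|mdot n m q X j| + c / Cj j⌉ with hBd
    refine Set.Finite.subset (Set.Finite.pi (fun j => Set.finite_Icc (-(Bd j)) (Bd j))) ?_
    intro p hp
    simp only [Set.mem_pi, Set.mem_univ, forall_true_left, Set.mem_Icc]
    intro j
    have h1 : Cj j ≤ ∏ j' ∈ Finset.univ.erase j, |mdot n m q X j' + (p j' : ℝ)| := by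
      apply Finset.prod_le_prod
      · intro j' _; exact nd_nonneg _
      · intro j' _; exact nd_le _ _
    have h2 : |mdot n m q X j + (p j : ℝ)| * Cj j ≤ ∏ j', |mdot n m q X j' + (p j' : ℝ)| := by
      rw [← Finset.mul_prod_erase _ _ (Finset.mem_univ j)]
      exact mul_le_mul_of_nonneg_left h1 (abs_nonneg _)
    have h3 : |mdot n m q X j + (p j : ℝ)| < c / Cj j := by
      rw [lt_div_iff₀ (hCjpos j)]
      exact lt_of_le_of_lt h2 hp
    have h4 : |(p j : ℝ)| ≤ |mdot n m q X j| + c / Cj j := by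
      calc |(p j : ℝ)| = |(mdot n m q X j + (p j : ℝ)) - mdot n m q X j| := by congr 1; ring
        _ ≤ |mdot n m q X j + (p j : ℝ)| + |mdot n m q X j| := abs_sub _ _
        _ ≤ |mdot n m q X j| + c / Cj j := by linarith
    have h5 : |((p j : ℤ) : ℝ)| ≤ ((Bd j : ℤ) : ℝ) := le_trans h4 (Int.le_ceil _)
    have h6 : |p j| ≤ Bd j := by exact_mod_cast h5
    exact abs_le.mp h6
  -- the solution pair set
  set P : Set ((Fin n → ℤ) × (Fin m → ℤ)) :=
    {qp | qp.1 ≠ 0 ∧ (∏ j, |mdot n m qp.1 X j + (qp.2 j : ℝ)|) < Ψ qp.1} with hP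
  have hPinf : P.Infinite := hinf
  set QI : Set (Fin n → ℤ) := Prod.fst '' P with hQ
  have hQinf : QI.Infinite := by
    intro hfin
    apply hPinf
    have hsub : P ⊆ ⋃ q ∈ QI, Prod.mk q '' {p | (q, p) ∈ P} := by
      rintro ⟨q, p⟩ hqp
      exact Set.mem_biUnion ⟨(q,p), hqp, rfl⟩ ⟨p, hqp, rfl⟩
    refine Set.Finite.subset (Set.Finite.biUnion hfin ?_) hsub
    intro q hq
    obtain ⟨⟨q', p'⟩, hq'P, hq'⟩ := hq
    have hq0 : q ≠ 0 := by subst hq'; exact hq'P.1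
    exact Set.Finite.image _ (Set.Finite.subset (hfib q hq0 (Ψ q)) (fun p hp => hp.2))
  -- pigeonhole for the max coordinate
  obtain ⟨i₀, hS'⟩ : ∃ i₀ : Fin n, {q ∈ QI | ∀ i, |q i| ≤ |q i₀|}.Infinite := by
    by_contra hcon
    push_neg at hcon
    apply hQinf
    have hsub : QI ⊆ ⋃ i₀ ∈ (Finset.univ : Finset (Fin n)), {q ∈ QI | ∀ i, |q i| ≤ |q i₀|} := by
      intro q hq
      obtain ⟨i₀, -, hmax⟩ := Finset.exists_max_image Finset.univ (fun i => |q i|)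
        ⟨⟨0, hn⟩, Finset.mem_univ _⟩
      exact Set.mem_biUnion (Finset.mem_univ i₀) ⟨hq, fun i => hmax i (Finset.mem_univ i)⟩
    exact Set.Finite.subset (Set.Finite.biUnion (Finset.univ : Finset (Fin n)).finite_toSet
      (fun i₀ _ => hcon i₀)) hsub
  -- membership in the infinitely-many-good-solutions set
  have hsols : X ∈ ⋂ M : ℕ, ⋃ q ∈ mgood n i₀ M, msol n m q (Ψ q) := by
    rw [Set.mem_iInter]
    intro M
    obtain ⟨q, hqS', hqout⟩ : ∃ q ∈ {q ∈ QI | ∀ i, |q i| ≤ |q i₀|},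
        q ∉ {q : Fin n → ℤ | ∀ i, q i ∈ Set.Icc (-(M:ℤ)) M} := by
      by_contra hcon
      push_neg at hcon
      apply hS'
      refine Set.Finite.subset (Set.Finite.pi (fun i => Set.finite_Icc (-(M:ℤ)) (M:ℤ))) ?_
      intro q hq
      simp only [Set.mem_pi, Set.mem_univ, forall_true_left]
      intro i
      exact hcon q hq i
    obtain ⟨hqQ, hqmax⟩ := hqS'
    simp only [Set.mem_setOf_eq, not_forall, Set.mem_Icc, not_and_or, not_le] at hqout
    have hqM : (M:ℤ) ≤ |q i₀| := by
      obtain ⟨i, hi⟩ := hqout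
      have h1 : (M:ℤ) + 1 ≤ |q i| := by
        rcases hi with hi | hi
        · exact le_trans (by omega) (neg_le_abs (q i))
        · exact le_trans (by omega) (le_abs_self (q i))
      exact le_trans (by omega) (le_trans h1 (hqmax i))
    obtain ⟨⟨q', p'⟩, hp'P, hq'⟩ := hqQ
    have hsol : X ∈ msol n m q (Ψ q) := by
      subst hq'
      exact ⟨p', hp'P.2⟩
    exact Set.mem_biUnion ⟨hqmax, hqM⟩ hsol
  -- the exclusion part
  set P' : Set ((Fin n → ℤ) × (Fin m → ℤ)) :=
    {qp | qp.1 ≠ 0 ∧ (∏ j, |mdot n m qp.1 X j + (qp.2 j : ℝ)|) < Ψ qp.1 / ((k:ℕ):ℝ)} with hP'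
  have hP'fin : P'.Finite := by
    rcases Set.finite_or_infinite P' with h | h
    · exact h
    · exact absurd ⟨hbox, h⟩ hk
  have hQFfin : (Prod.fst '' P').Finite := hP'fin.image Prod.fst
  set bfun : (Fin n → ℤ) → ℕ := fun q => Finset.univ.sup (fun i => (q i).natAbs) with hbfun
  obtain ⟨N₀, hN₀⟩ := (hQFfin.image bfun).bddAbove
  have hexcl : X ∈ ⋂ q ∈ mbig n (N₀+1), (msol n m q (Ψ q / ((k:ℕ):ℝ)))ᶜ := by
    refine Set.mem_iInter.mpr fun q => Set.mem_iInter.mpr fun hqbig => ?_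
    intro hsol
    obtain ⟨i, hi⟩ := hqbig
    have hq0 : q ≠ 0 := by
      intro h0
      rw [h0] at hi
      simp at hi
      omega
    obtain ⟨p, hp⟩ := hsol
    have hmem : (q, p) ∈ P' := ⟨hq0, hp⟩
    have hb : bfun q ≤ N₀ :=
      hN₀ (Set.mem_image_of_mem bfun (Set.mem_image_of_mem Prod.fst hmem))
    have hb2 : (q i).natAbs ≤ N₀ := le_trans (Finset.le_sup (f := fun i => (q i).natAbs) (Finset.mem_univ i)) hb
    rw [Int.abs_eq_natAbs] at hi
    omega
  exact Set.mem_iUnion.mpr ⟨k, Set.mem_iUnion.mpr ⟨N₀+1, Set.mem_iUnion.mpr ⟨i₀,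
    ⟨⟨⟨hbox, hNN⟩, hsols⟩, hexcl⟩⟩⟩⟩

theorem multA_diff_inter_null (n m : ℕ) (hn : 1 ≤ n) (hm : 1 ≤ m)
    (Ψ : (Fin n → ℤ) → ℝ) (hΨ : ∀ q, q ≠ 0 → 0 ≤ Ψ q) :
    volume (multSetA n m Ψ \ ⋂ k : ℕ+, multSetA n m (fun q => Ψ q / (k : ℝ))) = 0 := by
  apply measure_mono_null (mreduction n m hn hm Ψ)
  apply measure_union_null (mNN_null n m)
  refine measure_iUnion_null fun k => measure_iUnion_null fun N =>
    measure_iUnion_null fun i₀ => ?_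
  exact mBad_null n m hm Ψ (k:ℕ) N k.property i₀
end
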